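/- arXiv:1502.05361 — 2 statements merged into one kernel-verified Lean document; each statement's English description precedes it below -/
import Mathlib

section
/- Let G = (V, E) be a graph with |V| = n that admits a nice tree decomposition of width τ with N nodes. Then there exist a polytope P = {x ∈ ℝ^m : Ax ≤ b, Cx = d}, where m and the total number of rows of A and C are at most c·3^(τ+1)·N for an absolute constant c, and a linear map π : ℝ^m → ℝ^V, such that π(P) equals the odd cycle transversal polytope of G, i.e., the convex hull of the characteristic vectors χ_W ∈ {0,1}^V of all sets W ⊆ V such that the induced subgraph G[V \ W] is bipartite. -/
/-! Common definitions: CSP instances, configurations, nice tree decompositions,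
and the polytopes from Kolman–Koutecký. -/

/-- A constraint with scope `scope`; its satisfaction depends only on the
coordinates in the scope (it is a relation on the domains of the scope). -/
structure CSPConstraint (n : ℕ) where
  scope : Finset (Fin n)
  sat : (Fin n → ℝ) → Prop
  sat_congr : ∀ z z' : Fin n → ℝ, (∀ v ∈ scope, z v = z' v) → sat z → sat z'

/-- A CSP instance: finite real domains, hard constraints and soft constraints. -/
structure CSPInstance (n : ℕ) where
  dom : Fin n → Finset ℝ
  hard : List (CSPConstraint n)
  soft : List (CSPConstraint n)

variable {n : ℕ}

/-- The list of all constraints (hard and soft). -/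
def consList (Q : CSPInstance n) : List (CSPConstraint n) := Q.hard ++ Q.soft

/-- A feasible assignment: values in the domains, satisfying all hard constraints. -/
def Feasible (Q : CSPInstance n) (z : Fin n → ℝ) : Prop :=
  (∀ v, z v ∈ Q.dom v) ∧ ∀ C ∈ Q.hard, C.sat z

-- Configurations of a set `W` of variables: partial assignments (with `none`
-- playing the role of the symbol `λ`) defined exactly on `W`.
open Classical in
noncomputable def configs (Q : CSPInstance n) (W : Finset (Fin n)) :
    Finset (Fin n → Option ℝ) :=
  (Fintype.piFinset fun v =>
      if v ∈ W then (Q.dom v).image some else ({none} : Finset (Option ℝ))).filter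
    (fun K => ∀ C ∈ Q.hard, C.scope ⊆ W → C.sat (fun v => (K v).getD 0))

/-- Restriction `K↾_W` of a configuration: coordinates outside `W` are set to `λ`. -/
def restrictCfg (K : Fin n → Option ℝ) (W : Finset (Fin n)) : Fin n → Option ℝ :=
  fun v => if v ∈ W then K v else none

/-- A (rooted) nice tree: leaves, introduce nodes, forget nodes and join nodes. -/
inductive NiceTree (n : ℕ) : Type
  | leaf (v : Fin n) : NiceTree n
  | introduce (v : Fin n) (t : NiceTree n) : NiceTree n
  | forget (v : Fin n) (t : NiceTree n) : NiceTree n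
  | join (t₁ t₂ : NiceTree n) : NiceTree n

namespace NiceTree

/-- The bag of the root node of a nice tree. -/
def bag : NiceTree n → Finset (Fin n)
  | leaf v => {v}
  | introduce v t => insert v (bag t)
  | forget v t => (bag t).erase v
  | join t₁ _ => bag t₁

/-- All vertices appearing in bags of the tree. -/
def verts : NiceTree n → Finset (Fin n)
  | leaf v => {v}
  | introduce v t => insert v (verts t)
  | forget _ t => verts t
  | join t₁ t₂ => verts t₁ ∪ verts t₂

/-- Number of nodes of the tree. -/
def size : NiceTree n → ℕ
  | leaf _ => 1
  | introduce _ t => size t + 1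
  | forget _ t => size t + 1
  | join t₁ t₂ => size t₁ + size t₂ + 1

/-- Structural validity of a nice tree (in particular, the connectivity
condition of tree decompositions: an introduced vertex does not occur below,
and vertices shared by the two subtrees of a join lie in its bag). -/
def valid : NiceTree n → Prop
  | leaf _ => True
  | introduce v t => v ∉ verts t ∧ valid t
  | forget v t => v ∈ bag t ∧ valid t
  | join t₁ t₂ => bag t₁ = bag t₂ ∧ verts t₁ ∩ verts t₂ ⊆ bag t₁ ∧ valid t₁ ∧ valid t₂

/-- `isSubtree s t`: `s` is a node (subtree) of `t`. -/
def isSubtree (s : NiceTree n) : NiceTree n → Prop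
  | leaf v => s = leaf v
  | introduce v t => s = introduce v t ∨ isSubtree s t
  | forget v t => s = forget v t ∨ isSubtree s t
  | join t₁ t₂ => s = join t₁ t₂ ∨ isSubtree s t₁ ∨ isSubtree s t₂

-- The configurations relevant to the subtree: `ℛ(a) = ⋃_{b ∈ T(a)} 𝒦(B(b))`.
open Classical in
noncomputable def relConfigs (Q : CSPInstance n) : NiceTree n → Finset (Fin n → Option ℝ)
  | leaf v => configs Q {v}
  | introduce v t => configs Q (insert v (bag t)) ∪ relConfigs Q t
  | forget v t => configs Q ((bag t).erase v) ∪ relConfigs Q t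
  | join t₁ t₂ => relConfigs Q t₁ ∪ relConfigs Q t₂

end NiceTree

/-- A valid nice tree decomposition for the CSP instance `Q`: every variable is
in some bag and every constraint scope is contained in some bag. -/
def IsNiceTreeDecompCSP (Q : CSPInstance n) (T : NiceTree n) : Prop :=
  T.valid ∧ (∀ v : Fin n, v ∈ T.verts) ∧
    ∀ C ∈ consList Q, ∃ s : NiceTree n, s.isSubtree T ∧ C.scope ⊆ s.bag

/-- A valid nice tree decomposition of a graph `G`: every vertex is in some bag
and both endpoints of every edge lie in a common bag. -/
def IsNiceTreeDecompGraph (G : SimpleGraph (Fin n)) (T : NiceTree n) : Prop :=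
  T.valid ∧ (∀ v : Fin n, v ∈ T.verts) ∧
    ∀ u v : Fin n, G.Adj u v → ∃ s : NiceTree n, s.isSubtree T ∧ u ∈ s.bag ∧ v ∈ s.bag

/-- The constraint graph of a CSP instance. -/
def constraintGraph (Q : CSPInstance n) : SimpleGraph (Fin n) where
  Adj u v := u ≠ v ∧ ∃ C ∈ consList Q, u ∈ C.scope ∧ v ∈ C.scope
  symm := by
    constructor
    rintro u v ⟨hne, C, hC, hu, hv⟩
    exact ⟨hne.symm, C, hC, hv, hu⟩
  loopless := by
    constructor
    rintro v ⟨hne, -⟩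
    exact hne rfl

-- The LP constraints of `P(Q)` relevant to the subtree `t`: bag equations and
-- consistency equations at introduce and forget nodes of `t`.
def RelCons (Q : CSPInstance n) (f : (Fin n → Option ℝ) → ℝ) : NiceTree n → Prop
  | .leaf v => ∑ K ∈ configs Q {v}, f K = 1
  | .introduce v t =>
      RelCons Q f t ∧ (∑ K ∈ configs Q (insert v t.bag), f K = 1) ∧
      ∀ K ∈ configs Q t.bag,
        ∑ K' ∈ (configs Q (insert v t.bag)).filter
            (fun K' => restrictCfg K' t.bag = K), f K' = f K
  | .forget v t =>
      RelCons Q f t ∧ (∑ K ∈ configs Q (t.bag.erase v), f K = 1) ∧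
      ∀ K ∈ configs Q (t.bag.erase v),
        ∑ K' ∈ (configs Q t.bag).filter
            (fun K' => restrictCfg K' (t.bag.erase v) = K), f K' = f K
  | .join t₁ t₂ => RelCons Q f t₁ ∧ RelCons Q f t₂

/-- All the constraints of `P(Q)` relevant to the subtree `t`, including the
bounds `0 ≤ f(K) ≤ 1` for relevant configurations. -/
def RelevantLP (Q : CSPInstance n) (t : NiceTree n) (f : (Fin n → Option ℝ) → ℝ) : Prop :=
  RelCons Q f t ∧ ∀ K ∈ t.relConfigs Q, 0 ≤ f K ∧ f K ≤ 1

/-- The polytope `P(Q) ⊆ ℝ^{𝒦_ℬ}` (coordinates outside `𝒦_ℬ` are zero). -/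
def Ppoly (Q : CSPInstance n) (T : NiceTree n) : Set ((Fin n → Option ℝ) → ℝ) :=
  {f | RelevantLP Q T f ∧ ∀ K, K ∉ T.relConfigs Q → f K = 0}

/-- Extended feasible assignments `(z, h)`. -/
def ExtAssignments (Q : CSPInstance n) :
    Set ((Fin n → ℝ) × (Fin Q.soft.length → ℝ)) :=
  {p | Feasible Q p.1 ∧ ∀ i : Fin Q.soft.length,
      ((Q.soft.get i).sat p.1 ∧ p.2 i = 1) ∨ (¬ (Q.soft.get i).sat p.1 ∧ p.2 i = 0)}

/-- `CSP(Q)`: the convex hull of all extended feasible assignments. -/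
def CSPpolytope (Q : CSPInstance n) : Set ((Fin n → ℝ) × (Fin Q.soft.length → ℝ)) :=
  convexHull ℝ (ExtAssignments Q)

/-- `CSP'(Q)`: the convex hull of all feasible assignments. -/
def CSPpolytope' (Q : CSPInstance n) : Set (Fin n → ℝ) :=
  convexHull ℝ {z | Feasible Q z}

/-- The `y`-variables of the basic LP: one for each `v ∈ V` and `i ∈ D_v`. -/
abbrev YType (Q : CSPInstance n) := (v : Fin n) → {i : ℝ // i ∈ Q.dom v} → ℝ

/-- The `g`-variables of the basic LP: one for each constraint `C_U ∈ 𝒞 ∪ ℋ`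
and each configuration `K ∈ 𝒦(U)`. -/
abbrev GType (Q : CSPInstance n) :=
  (c : Fin (consList Q).length) →
    {K : Fin n → Option ℝ // K ∈ configs Q ((consList Q).get c).scope} → ℝ

/-- The basic LP (1)–(3). -/
def BasicLP (Q : CSPInstance n) (p : YType Q × GType Q) : Prop :=
  (∀ v : Fin n, ∑ i ∈ (Q.dom v).attach, p.1 v i = 1) ∧
  (∀ c : Fin (consList Q).length, ∀ v ∈ ((consList Q).get c).scope,
    ∀ (i : ℝ) (hi : i ∈ Q.dom v),
      ∑ K ∈ (configs Q ((consList Q).get c).scope).attach.filter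
          (fun K => K.1 v = some i), p.2 c K = p.1 v ⟨i, hi⟩) ∧
  (∀ v i, 0 ≤ p.1 v i ∧ p.1 v i ≤ 1) ∧ (∀ c K, 0 ≤ p.2 c K ∧ p.2 c K ≤ 1)

/-- Integrality (all coordinates in `{0,1}`) of a `(y, g)` vector. -/
def IntegralYG (Q : CSPInstance n) (p : YType Q × GType Q) : Prop :=
  (∀ v i, p.1 v i = 0 ∨ p.1 v i = 1) ∧ ∀ c K, p.2 c K = 0 ∨ p.2 c K = 1

-- The map sending a (feasible) assignment `z` to the `(y, g)` vector of the basic LP.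
open Classical in
noncomputable def exMap (Q : CSPInstance n) (z : Fin n → ℝ) : YType Q × GType Q :=
  (fun v i => if z v = i.1 then 1 else 0,
   fun c K => if ∀ u ∈ ((consList Q).get c).scope, K.1 u = some (z u) then 1 else 0)

open Classical
noncomputable section OCTProof
namespace OCTProof

variable {n : ℕ}

lemma NiceTree.isSubtree_refl (t : NiceTree n) : t.isSubtree t := by
  cases t <;> simp [NiceTree.isSubtree]

lemma NiceTree.bag_subset_verts (t : NiceTree n) : t.bag ⊆ t.verts := by
  induction t with
  | leaf v => simp [NiceTree.bag, NiceTree.verts]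
  | introduce v t ih => simpa [NiceTree.bag, NiceTree.verts] using Finset.insert_subset_insert _ ih
  | forget v t ih =>
      exact (Finset.erase_subset _ _).trans ih
  | join t₁ t₂ ih₁ ih₂ =>
      exact ih₁.trans Finset.subset_union_left

lemma NiceTree.verts_subset_of_isSubtree {s t : NiceTree n} (h : s.isSubtree t) :
    s.verts ⊆ t.verts := by
  induction t with
  | leaf v => cases h; exact Finset.Subset.refl _
  | introduce v t ih =>
      rcases h with h | h
      · cases h; exact Finset.Subset.refl _
      · exact (ih h).trans (Finset.subset_insert _ _)
  | forget v t ih =>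
      rcases h with h | h
      · cases h; exact Finset.Subset.refl _
      · exact ih h
  | join t₁ t₂ ih₁ ih₂ =>
      rcases h with h | h | h
      · cases h; exact Finset.Subset.refl _
      · exact (ih₁ h).trans Finset.subset_union_left
      · exact (ih₂ h).trans Finset.subset_union_right

lemma NiceTree.bag_subset_of_isSubtree {s t : NiceTree n} (h : s.isSubtree t) :
    s.bag ⊆ t.verts :=
  (NiceTree.bag_subset_verts s).trans (NiceTree.verts_subset_of_isSubtree h)

/-- Dirac delta vector. -/
def delt {F : Type*} [DecidableEq F] (k : F) : F → ℝ := fun h => if h = k then 1 else 0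

/-- Canonical extension-by-zero of a coloring outside `B`. -/
def resC (g : Fin n → Fin 3) (B : Finset (Fin n)) : Fin n → Fin 3 :=
  fun v => if v ∈ B then g v else 0

lemma resC_resC {g : Fin n → Fin 3} {B C : Finset (Fin n)} (h : B ⊆ C) :
    resC (resC g C) B = resC g B := by
  funext v; simp only [resC]
  by_cases hv : v ∈ B
  · simp [hv, h hv]
  · simp [hv]

lemma resC_eq_on {g : Fin n → Fin 3} {B : Finset (Fin n)} {v : Fin n} (hv : v ∈ B) :
    resC g B v = g v := by simp [resC, hv]

/-- Local feasibility of a coloring on a bag. -/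
def OKc (G : SimpleGraph (Fin n)) (B : Finset (Fin n)) (g : Fin n → Fin 3) : Prop :=
  ∀ u ∈ B, ∀ v ∈ B, G.Adj u v → g u = g v → g u = 2

lemma OKc_mono {G : SimpleGraph (Fin n)} {B B' : Finset (Fin n)} (h : B ⊆ B')
    {g : Fin n → Fin 3} (hg : OKc G B' g) : OKc G B g :=
  fun u hu v hv => hg u (h hu) v (h hv)

lemma OKc_congr {G : SimpleGraph (Fin n)} {B : Finset (Fin n)} {g g' : Fin n → Fin 3}
    (h : ∀ v ∈ B, g v = g' v) (hg : OKc G B g) : OKc G B g' := by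
  intro u hu v hv hadj he
  rw [← h u hu] at he ⊢
  rw [← h v hv] at he
  exact hg u hu v hv hadj he

/-- The colorings relevant to a subtree. -/
def Good (G : SimpleGraph (Fin n)) (t : NiceTree n) : Set (Fin n → Fin 3) :=
  {g | resC g t.verts = g ∧ ∀ s : NiceTree n, s.isSubtree t → OKc G s.bag g}

/-- Output space of the extended formulation built by induction. -/
abbrev OutSp (n : ℕ) := (Fin n → ℝ) × ((Fin n → Fin 3) → ℝ)

/-- The incidence vector of the `W`-part of a coloring. -/
def xvec (t : NiceTree n) (g : Fin n → Fin 3) : Fin n → ℝ :=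
  fun v => if v ∈ t.verts ∧ g v = 2 then 1 else 0

/-- The vertex of the big polytope corresponding to a coloring. -/
def outF (t : NiceTree n) (g : Fin n → Fin 3) : OutSp n :=
  (xvec t g, delt (resC g t.bag))

lemma card_canon_le (B : Finset (Fin n)) (P : (Fin n → Fin 3) → Prop) :
    Fintype.card {g : Fin n → Fin 3 // resC g B = g ∧ P g} ≤ 3 ^ B.card := by
  have hinj : Function.Injective
      (fun g : {g : Fin n → Fin 3 // resC g B = g ∧ P g} => fun b : ↥B => g.1 b.1) := by
    intro a b h
    apply Subtype.ext; funext v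
    by_cases hv : v ∈ B
    · exact congrFun h ⟨v, hv⟩
    · rw [← a.2.1, ← b.2.1]; simp [resC, hv]
  calc Fintype.card {g : Fin n → Fin 3 // resC g B = g ∧ P g}
      ≤ Fintype.card (↥B → Fin 3) := Fintype.card_le_of_injective _ hinj
    _ = 3 ^ B.card := by simp [Fintype.card_fun]

/-! ### Generic convexity lemmas -/

section Convexity

variable {E : Type*} [AddCommGroup E] [Module ℝ E]

lemma exists_rep {A : Type*} {Γ : Set A} {f : A → E} {p : E}
    (hp : p ∈ convexHull ℝ (f '' Γ)) :
    ∃ (ι : Type) (s : Finset ι) (w : ι → ℝ) (γ : ι → A),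
      (∀ i ∈ s, 0 ≤ w i) ∧ ∑ i ∈ s, w i = 1 ∧ (∀ i ∈ s, γ i ∈ Γ) ∧
      ∑ i ∈ s, w i • f (γ i) = p := by
  rw [convexHull_eq] at hp
  obtain ⟨ι, s, w, z, hw0, hw1, hz, hc⟩ := hp
  have hsne : s.Nonempty := Finset.nonempty_of_sum_ne_zero (by rw [hw1]; norm_num)
  obtain ⟨i₀, hi₀⟩ := hsne
  have hA : ∃ γ, γ ∈ Γ ∧ f γ = z i₀ := by
    obtain ⟨γ, hγ, he⟩ := hz i₀ hi₀; exact ⟨γ, hγ, he⟩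
  have hch : ∀ i, ∃ γ, γ ∈ Γ ∧ (i ∈ s → f γ = z i) := by
    intro i
    by_cases hi : i ∈ s
    · obtain ⟨γ, hγ, he⟩ := hz i hi; exact ⟨γ, hγ, fun _ => he⟩
    · exact ⟨hA.choose, hA.choose_spec.1, fun h => absurd h hi⟩
  choose γ hγΓ hγe using hch
  refine ⟨ι, s, w, γ, hw0, hw1, fun i _ => hγΓ i, ?_⟩
  rw [Finset.centerMass_eq_of_sum_1 _ _ hw1] at hc
  rw [← hc]
  exact Finset.sum_congr rfl fun i hi => by rw [hγe i hi]

lemma mem_hull_of_rep {A : Type*} {Γ : Set A} {f : A → E} {p : E}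
    {ι : Type*} {s : Finset ι} {w : ι → ℝ} {γ : ι → A}
    (hw0 : ∀ i ∈ s, 0 ≤ w i) (hw1 : ∑ i ∈ s, w i = 1) (hγ : ∀ i ∈ s, γ i ∈ Γ)
    (hc : ∑ i ∈ s, w i • f (γ i) = p) : p ∈ convexHull ℝ (f '' Γ) := by
  rw [← hc, ← Finset.centerMass_eq_of_sum_1 _ _ hw1]
  exact Finset.centerMass_mem_convexHull _ hw0 (by rw [hw1]; norm_num)
    fun i hi => Set.mem_image_of_mem f (hγ i hi)

/-- The image of the standard simplex under the canonical linear map is the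
convex hull of the images of the basis vectors. -/
lemma simplex_image {J : Type*} [Fintype J] (y : J → E) :
    (⇑(∑ j : J, (LinearMap.proj j : (J → ℝ) →ₗ[ℝ] ℝ).smulRight (y j))) '' stdSimplex ℝ J
      = convexHull ℝ (Set.range y) := by
  have happ : ∀ x : J → ℝ,
      (∑ j : J, (LinearMap.proj j : (J → ℝ) →ₗ[ℝ] ℝ).smulRight (y j)) x
        = ∑ j : J, x j • y j := by
    intro x
    rw [LinearMap.sum_apply]
    exact Finset.sum_congr rfl fun j _ => rfl
  apply Set.Subset.antisymm
  · rintro _ ⟨x, hx, rfl⟩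
    rw [happ, ← Finset.centerMass_eq_of_sum_1 _ _ hx.2]
    exact Finset.centerMass_mem_convexHull _ (fun j _ => hx.1 j) (by rw [hx.2]; norm_num)
      fun j _ => Set.mem_range_self j
  · apply convexHull_min
    · rintro _ ⟨j₀, rfl⟩
      refine ⟨fun j => if j = j₀ then 1 else 0, ⟨fun j => by by_cases h : j = j₀ <;> simp [h], by simp⟩, ?_⟩
      rw [happ]
      simp [ite_smul]
    · exact (convex_stdSimplex ℝ J).is_linear_image (LinearMap.isLinear _)

/-- Points of a hull whose generators vanish at a coordinate vanish there too. -/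
lemma hull_eval_eq {F : Type*} {S : Set (E × (F → ℝ))} {h : F} {r : ℝ}
    (hs : ∀ p ∈ S, p.2 h = r) : ∀ p ∈ convexHull ℝ S, p.2 h = r := by
  intro p hp
  have hconv : Convex ℝ {p : E × (F → ℝ) | p.2 h = r} :=
    convex_hyperplane (f := fun p : E × (F → ℝ) => p.2 h)
      ⟨fun a b => rfl, fun c a => by simp⟩ r
  exact convexHull_min hs hconv hp

end Convexity

/-! ### The gluing lemma -/

section Glue

variable {E₁ E₂ : Type} [AddCommGroup E₁] [Module ℝ E₁] [AddCommGroup E₂] [Module ℝ E₂]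
  {F : Type} [DecidableEq F]

lemma sum_filter_smul {ι ι' M : Type*} [AddCommGroup M] [Module ℝ M]
    (s : Finset ι) (s' : Finset ι') (P : ι → ι' → Prop) [∀ i j, Decidable (P i j)]
    (c : ι → ι' → ℝ) (hc : ∀ i j, ¬ P i j → c i j = 0) (f : ι × ι' → M) :
    ∑ q ∈ (s ×ˢ s').filter (fun q => P q.1 q.2), c q.1 q.2 • f q
      = ∑ i ∈ s, ∑ j ∈ s', c i j • f (i, j) := by
  rw [Finset.sum_filter, Finset.sum_product]
  refine Finset.sum_congr rfl fun i _ => Finset.sum_congr rfl fun j _ => ?_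
  by_cases hq : P i j
  · rw [if_pos hq]
  · rw [if_neg hq, hc i j hq, zero_smul]

lemma glue_lemma {A₁ A₂ : Type} (Γ₁ : Set A₁) (Γ₂ : Set A₂)
    (a₁ : A₁ → E₁) (a₂ : A₂ → E₂) (k₁ : A₁ → F) (k₂ : A₂ → F) :
    {p : E₁ × E₂ × (F → ℝ) |
        (p.1, p.2.2) ∈ convexHull ℝ ((fun γ => (a₁ γ, delt (k₁ γ))) '' Γ₁) ∧
        (p.2.1, p.2.2) ∈ convexHull ℝ ((fun γ => (a₂ γ, delt (k₂ γ))) '' Γ₂)} =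
      convexHull ℝ ((fun q : A₁ × A₂ => (a₁ q.1, a₂ q.2, delt (k₁ q.1))) ''
        {q | q.1 ∈ Γ₁ ∧ q.2 ∈ Γ₂ ∧ k₁ q.1 = k₂ q.2}) := by
  apply Set.Subset.antisymm
  · rintro ⟨e₁, e₂, μ⟩ ⟨h₁, h₂⟩
    obtain ⟨ι, s, w, γ, hw0, hw1, hγ, hrep⟩ := exists_rep h₁
    obtain ⟨ι', s', u, γ', hu0, hu1, hγ', hrep'⟩ := exists_rep h₂
    have h1a : ∑ i ∈ s, w i • a₁ (γ i) = e₁ := by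
      have := congrArg Prod.fst hrep
      simpa [Prod.fst_sum] using this
    have h2a : ∑ j ∈ s', u j • a₂ (γ' j) = e₂ := by
      have := congrArg Prod.fst hrep'
      simpa [Prod.fst_sum] using this
    have h1d : ∑ i ∈ s, w i • delt (k₁ (γ i)) = μ := by
      have := congrArg Prod.snd hrep
      simpa [Prod.snd_sum] using this
    have h2d : ∑ j ∈ s', u j • delt (k₂ (γ' j)) = μ := by
      have := congrArg Prod.snd hrep'
      simpa [Prod.snd_sum] using this
    have h1μ : ∀ h : F, (∑ i ∈ s, if k₁ (γ i) = h then w i else 0) = μ h := by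
      intro h
      have := congrArg (fun ν : F → ℝ => ν h) h1d
      simpa [Finset.sum_apply, delt, mul_ite, eq_comm] using this
    have h2μ : ∀ h : F, (∑ j ∈ s', if k₂ (γ' j) = h then u j else 0) = μ h := by
      intro h
      have := congrArg (fun ν : F → ℝ => ν h) h2d
      simpa [Finset.sum_apply, delt, mul_ite, eq_comm] using this
    have hμ0 : ∀ h, 0 ≤ μ h := by
      intro h
      rw [← h1μ h]
      refine Finset.sum_nonneg fun i hi => ?_
      split
      · exact hw0 i hi
      · exact le_rfl
    set SW : ι → ι' → ℝ := fun i j =>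
      if k₁ (γ i) = k₂ (γ' j) then w i * u j / μ (k₁ (γ i)) else 0 with hSW
    have hSW0 : ∀ i ∈ s, ∀ j ∈ s', 0 ≤ SW i j := by
      intro i hi j hj
      rw [hSW]
      dsimp only
      split
      · exact div_nonneg (mul_nonneg (hw0 i hi) (hu0 j hj)) (hμ0 _)
      · exact le_rfl
    have hL1 : ∀ i ∈ s, ∑ j ∈ s', SW i j = w i := by
      intro i hi
      have hfac : ∑ j ∈ s', SW i j
          = (w i / μ (k₁ (γ i))) * ∑ j ∈ s', (if k₂ (γ' j) = k₁ (γ i) then u j else 0) := by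
        rw [Finset.mul_sum]
        refine Finset.sum_congr rfl fun j hj => ?_
        rw [hSW]
        dsimp only
        by_cases hc : k₂ (γ' j) = k₁ (γ i)
        · rw [if_pos hc.symm, if_pos hc]; ring
        · rw [if_neg (fun he => hc he.symm), if_neg hc, mul_zero]
      rw [hfac, h2μ]
      by_cases hc0 : μ (k₁ (γ i)) = 0
      · have hwle : w i ≤ μ (k₁ (γ i)) := by
          rw [← h1μ]
          have hnn : ∀ i' ∈ s, 0 ≤ if k₁ (γ i') = k₁ (γ i) then w i' else 0 := by
            intro i' hi'
            by_cases h : k₁ (γ i') = k₁ (γ i)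
            · rw [if_pos h]; exact hw0 i' hi'
            · rw [if_neg h]
          have := Finset.single_le_sum hnn hi
          simpa using this
        have hwi : w i = 0 := le_antisymm (hc0 ▸ hwle) (hw0 i hi)
        simp [hc0, hwi]
      · rw [div_mul_cancel₀ _ hc0]
    have hL2 : ∀ j ∈ s', ∑ i ∈ s, SW i j = u j := by
      intro j hj
      have hcongr : ∀ i, SW i j
          = if k₁ (γ i) = k₂ (γ' j) then w i * u j / μ (k₂ (γ' j)) else 0 := by
        intro i
        rw [hSW]
        dsimp only
        by_cases hc : k₁ (γ i) = k₂ (γ' j)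
        · rw [if_pos hc, if_pos hc, hc]
        · rw [if_neg hc, if_neg hc]
      have hfac : ∑ i ∈ s, SW i j
          = (u j / μ (k₂ (γ' j))) * ∑ i ∈ s, (if k₁ (γ i) = k₂ (γ' j) then w i else 0) := by
        rw [Finset.mul_sum]
        refine Finset.sum_congr rfl fun i hi => ?_
        rw [hcongr i]
        by_cases hc : k₁ (γ i) = k₂ (γ' j)
        · rw [if_pos hc, if_pos hc]; ring
        · rw [if_neg hc, if_neg hc, mul_zero]
      rw [hfac, h1μ]
      by_cases hc0 : μ (k₂ (γ' j)) = 0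
      · have hule : u j ≤ μ (k₂ (γ' j)) := by
          rw [← h2μ]
          have hnn : ∀ j' ∈ s', 0 ≤ if k₂ (γ' j') = k₂ (γ' j) then u j' else 0 := by
            intro j' hj'
            by_cases h : k₂ (γ' j') = k₂ (γ' j)
            · rw [if_pos h]; exact hu0 j' hj'
            · rw [if_neg h]
          have := Finset.single_le_sum hnn hj
          simpa using this
        have huj : u j = 0 := le_antisymm (hc0 ▸ hule) (hu0 j hj)
        simp [hc0, huj]
      · rw [div_mul_cancel₀ _ hc0]
    -- the joint decomposition
    set t : Finset (ι × ι') := (s ×ˢ s').filter fun q => k₁ (γ q.1) = k₂ (γ' q.2) with ht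
    have hSWvanish : ∀ i j, ¬ k₁ (γ i) = k₂ (γ' j) → SW i j = 0 := by
      intro i j hq
      rw [hSW]
      dsimp only
      rw [if_neg hq]
    have hsum_t : ∀ {M : Type} [AddCommGroup M] [Module ℝ M] (f : ι × ι' → M),
        ∑ q ∈ t, SW q.1 q.2 • f q = ∑ i ∈ s, ∑ j ∈ s', SW i j • f (i, j) := by
      intro M _ _ f
      rw [ht]
      exact sum_filter_smul s s' (fun i j => k₁ (γ i) = k₂ (γ' j)) SW hSWvanish f
    have hWsum : ∑ q ∈ t, SW q.1 q.2 = 1 := by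
      have := hsum_t (fun _ => (1:ℝ))
      simp only [smul_eq_mul, mul_one] at this
      rw [this]
      rw [Finset.sum_congr rfl hL1]
      exact hw1
    refine mem_hull_of_rep (s := t) (w := fun q => SW q.1 q.2)
      (γ := fun q => (γ q.1, γ' q.2)) ?_ hWsum ?_ ?_
    · intro q hq
      rw [ht] at hq
      obtain ⟨hqm, -⟩ := Finset.mem_filter.mp hq
      obtain ⟨hq1, hq2⟩ := Finset.mem_product.mp hqm
      exact hSW0 _ hq1 _ hq2
    · intro q hq
      rw [ht] at hq
      obtain ⟨hqm, hqk⟩ := Finset.mem_filter.mp hq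
      obtain ⟨hq1, hq2⟩ := Finset.mem_product.mp hqm
      exact ⟨hγ _ hq1, hγ' _ hq2, hqk⟩
    · -- the convex combination equals the point
      have hc1 : ∑ q ∈ t, SW q.1 q.2 • a₁ (γ q.1) = e₁ := by
        rw [hsum_t (fun q => a₁ (γ q.1))]
        dsimp only
        rw [← h1a]
        refine Finset.sum_congr rfl fun i hi => ?_
        rw [← Finset.sum_smul, hL1 i hi]
      have hc2 : ∑ q ∈ t, SW q.1 q.2 • a₂ (γ' q.2) = e₂ := by
        rw [hsum_t (fun q => a₂ (γ' q.2))]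
        dsimp only
        rw [Finset.sum_comm, ← h2a]
        refine Finset.sum_congr rfl fun j hj => ?_
        rw [← Finset.sum_smul, hL2 j hj]
      have hc3 : ∑ q ∈ t, SW q.1 q.2 • delt (k₁ (γ q.1)) = μ := by
        rw [hsum_t (fun q => delt (k₁ (γ q.1)))]
        dsimp only
        rw [← h1d]
        refine Finset.sum_congr rfl fun i hi => ?_
        rw [← Finset.sum_smul, hL1 i hi]
      have : ∑ q ∈ t, SW q.1 q.2 • (a₁ (γ q.1), a₂ (γ' q.2), delt (k₁ (γ q.1)))
          = (∑ q ∈ t, SW q.1 q.2 • a₁ (γ q.1),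
             ∑ q ∈ t, SW q.1 q.2 • a₂ (γ' q.2),
             ∑ q ∈ t, SW q.1 q.2 • delt (k₁ (γ q.1))) := by
        simp [Prod.ext_iff, Prod.fst_sum, Prod.snd_sum]
      rw [this, hc1, hc2, hc3]
  · apply convexHull_min
    · rintro _ ⟨⟨γ₁, γ₂⟩, ⟨hγ₁, hγ₂, hk⟩, rfl⟩
      constructor
      · exact subset_convexHull ℝ _ ⟨γ₁, hγ₁, rfl⟩
      · show (a₂ γ₂, delt (k₁ γ₁)) ∈ _
        rw [hk]
        exact subset_convexHull ℝ _ ⟨γ₂, hγ₂, rfl⟩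
    · have hcv : Convex ℝ
          (((LinearMap.fst ℝ E₁ (E₂ × (F → ℝ))).prod
              ((LinearMap.snd ℝ E₂ (F → ℝ)).comp (LinearMap.snd ℝ E₁ (E₂ × (F → ℝ)))) ⁻¹'
            convexHull ℝ ((fun γ => (a₁ γ, delt (k₁ γ))) '' Γ₁)) ∩
          (((LinearMap.fst ℝ E₂ (F → ℝ)).comp (LinearMap.snd ℝ E₁ (E₂ × (F → ℝ)))).prod
              ((LinearMap.snd ℝ E₂ (F → ℝ)).comp (LinearMap.snd ℝ E₁ (E₂ × (F → ℝ)))) ⁻¹'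
            convexHull ℝ ((fun γ => (a₂ γ, delt (k₂ γ))) '' Γ₂))) :=
        ((convex_convexHull ℝ _).linear_preimage _).inter
          ((convex_convexHull ℝ _).linear_preimage _)
      exact hcv

end Glue

/-! ### Linear systems and their combination -/

/-- The solution set of a finite system of linear inequalities and equations. -/
def SolSet {V R E : Type} (a : R → (V → ℝ) →ₗ[ℝ] ℝ) (b : R → ℝ)
    (c : E → (V → ℝ) →ₗ[ℝ] ℝ) (d : E → ℝ) : Set (V → ℝ) :=
  {x | (∀ r, a r x ≤ b r) ∧ ∀ e, c e x = d e}

section Combine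

variable {F : Type} [DecidableEq F]
variable {W₁ W₂ : Type} [AddCommGroup W₁] [Module ℝ W₁] [AddCommGroup W₂] [Module ℝ W₂]

lemma combine {V₁ V₂ R₁ R₂ E₁ E₂ : Type}
    (a₁ : R₁ → (V₁ → ℝ) →ₗ[ℝ] ℝ) (b₁ : R₁ → ℝ) (c₁ : E₁ → (V₁ → ℝ) →ₗ[ℝ] ℝ) (d₁ : E₁ → ℝ)
    (a₂ : R₂ → (V₂ → ℝ) →ₗ[ℝ] ℝ) (b₂ : R₂ → ℝ) (c₂ : E₂ → (V₂ → ℝ) →ₗ[ℝ] ℝ) (d₂ : E₂ → ℝ)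
    (π₁ : (V₁ → ℝ) →ₗ[ℝ] W₁ × (F → ℝ)) (π₂ : (V₂ → ℝ) →ₗ[ℝ] W₂ × (F → ℝ))
    (P₁ : Set (W₁ × (F → ℝ))) (P₂ : Set (W₂ × (F → ℝ))) (C : Set F)
    (h₁ : π₁ '' SolSet a₁ b₁ c₁ d₁ = P₁) (h₂ : π₂ '' SolSet a₂ b₂ c₂ d₂ = P₂)
    (hs₁ : ∀ p ∈ P₁, ∀ h, h ∉ C → p.2 h = 0) (hs₂ : ∀ p ∈ P₂, ∀ h, h ∉ C → p.2 h = 0) :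
    ∃ (a : R₁ ⊕ R₂ → ((V₁ ⊕ V₂) → ℝ) →ₗ[ℝ] ℝ) (b : R₁ ⊕ R₂ → ℝ)
      (c : (E₁ ⊕ E₂) ⊕ ↥C → ((V₁ ⊕ V₂) → ℝ) →ₗ[ℝ] ℝ) (d : (E₁ ⊕ E₂) ⊕ ↥C → ℝ)
      (Ψ : ((V₁ ⊕ V₂) → ℝ) →ₗ[ℝ] W₁ × W₂ × (F → ℝ)),
      Ψ '' SolSet a b c d
        = {p : W₁ × W₂ × (F → ℝ) | (p.1, p.2.2) ∈ P₁ ∧ (p.2.1, p.2.2) ∈ P₂} := by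
  set ρ₁ : ((V₁ ⊕ V₂) → ℝ) →ₗ[ℝ] (V₁ → ℝ) := LinearMap.funLeft ℝ ℝ Sum.inl with hρ₁
  set ρ₂ : ((V₁ ⊕ V₂) → ℝ) →ₗ[ℝ] (V₂ → ℝ) := LinearMap.funLeft ℝ ℝ Sum.inr with hρ₂
  refine ⟨Sum.elim (fun r => (a₁ r).comp ρ₁) (fun r => (a₂ r).comp ρ₂),
      Sum.elim b₁ b₂,
      Sum.elim (Sum.elim (fun e => (c₁ e).comp ρ₁) (fun e => (c₂ e).comp ρ₂))
        (fun h => ((LinearMap.proj h.1).comp ((LinearMap.snd ℝ W₁ (F → ℝ)).comp (π₁.comp ρ₁)))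
          - ((LinearMap.proj h.1).comp ((LinearMap.snd ℝ W₂ (F → ℝ)).comp (π₂.comp ρ₂)))),
      Sum.elim (Sum.elim d₁ d₂) (fun _ => 0),
      ((LinearMap.fst ℝ W₁ (F → ℝ)).comp (π₁.comp ρ₁)).prod
        ((((LinearMap.fst ℝ W₂ (F → ℝ)).comp (π₂.comp ρ₂))).prod
          ((LinearMap.snd ℝ W₁ (F → ℝ)).comp (π₁.comp ρ₁))), ?_⟩
  apply Set.Subset.antisymm
  · rintro _ ⟨x, hx, rfl⟩
    have hx₁ : ρ₁ x ∈ SolSet a₁ b₁ c₁ d₁ :=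
      ⟨fun r => hx.1 (Sum.inl r), fun e => hx.2 (Sum.inl (Sum.inl e))⟩
    have hx₂ : ρ₂ x ∈ SolSet a₂ b₂ c₂ d₂ :=
      ⟨fun r => hx.1 (Sum.inr r), fun e => hx.2 (Sum.inl (Sum.inr e))⟩
    have hp₁ : π₁ (ρ₁ x) ∈ P₁ := h₁ ▸ Set.mem_image_of_mem _ hx₁
    have hp₂ : π₂ (ρ₂ x) ∈ P₂ := h₂ ▸ Set.mem_image_of_mem _ hx₂
    have hkey : (π₁ (ρ₁ x)).2 = (π₂ (ρ₂ x)).2 := by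
      funext h
      by_cases hC : h ∈ C
      · have := hx.2 (Sum.inr ⟨h, hC⟩)
        simpa [sub_eq_zero] using this
      · rw [hs₁ _ hp₁ h hC, hs₂ _ hp₂ h hC]
    constructor
    · show ((π₁ (ρ₁ x)).1, (π₁ (ρ₁ x)).2) ∈ P₁
      simpa using hp₁
    · show ((π₂ (ρ₂ x)).1, (π₁ (ρ₁ x)).2) ∈ P₂
      rw [hkey]
      simpa using hp₂
  · rintro ⟨w₁, w₂, μ⟩ ⟨hp₁, hp₂⟩
    rw [← h₁] at hp₁
    rw [← h₂] at hp₂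
    obtain ⟨x₁, hx₁, he₁⟩ := hp₁
    obtain ⟨x₂, hx₂, he₂⟩ := hp₂
    have hres₁ : ρ₁ (Sum.elim x₁ x₂) = x₁ := rfl
    have hres₂ : ρ₂ (Sum.elim x₁ x₂) = x₂ := rfl
    refine ⟨Sum.elim x₁ x₂, ⟨?_, ?_⟩, ?_⟩
    · rintro (r | r)
      · show a₁ r (ρ₁ (Sum.elim x₁ x₂)) ≤ b₁ r
        rw [hres₁]; exact hx₁.1 r
      · show a₂ r (ρ₂ (Sum.elim x₁ x₂)) ≤ b₂ r
        rw [hres₂]; exact hx₂.1 r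
    · rintro ((e | e) | h)
      · show c₁ e (ρ₁ (Sum.elim x₁ x₂)) = d₁ e
        rw [hres₁]; exact hx₁.2 e
      · show c₂ e (ρ₂ (Sum.elim x₁ x₂)) = d₂ e
        rw [hres₂]; exact hx₂.2 e
      · show (π₁ (ρ₁ (Sum.elim x₁ x₂))).2 h.1 - (π₂ (ρ₂ (Sum.elim x₁ x₂))).2 h.1 = 0
        rw [hres₁, hres₂, he₁, he₂]
        simp
    · show ((π₁ (ρ₁ (Sum.elim x₁ x₂))).1, (π₂ (ρ₂ (Sum.elim x₁ x₂))).1,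
          (π₁ (ρ₁ (Sum.elim x₁ x₂))).2) = (w₁, w₂, μ)
      rw [hres₁, hres₂, he₁, he₂]

end Combine

/-- Simplex systems: the convex hull of finitely many points is a projection of
the standard simplex, which is given by a linear system. -/
lemma simplex_system {J : Type} [Fintype J] {M : Type} [AddCommGroup M] [Module ℝ M]
    (y : J → M) :
    ∃ (a : J → (J → ℝ) →ₗ[ℝ] ℝ) (b : J → ℝ) (c : Unit → (J → ℝ) →ₗ[ℝ] ℝ) (d : Unit → ℝ)
      (π : (J → ℝ) →ₗ[ℝ] M),
      π '' SolSet a b c d = convexHull ℝ (Set.range y) := by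
  refine ⟨fun j => -(LinearMap.proj j), fun _ => 0,
      fun _ => ∑ j : J, (LinearMap.proj j : (J → ℝ) →ₗ[ℝ] ℝ), fun _ => 1,
      ∑ j : J, (LinearMap.proj j : (J → ℝ) →ₗ[ℝ] ℝ).smulRight (y j), ?_⟩
  have hset : SolSet (fun j : J => -(LinearMap.proj j : (J → ℝ) →ₗ[ℝ] ℝ)) (fun _ => 0)
      (fun _ : Unit => ∑ j : J, (LinearMap.proj j : (J → ℝ) →ₗ[ℝ] ℝ)) (fun _ => 1)
        = stdSimplex ℝ J := by
    ext x
    constructor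
    · rintro ⟨hr, he⟩
      refine ⟨fun j => by simpa using hr j, ?_⟩
      have := he ()
      simpa using this
    · rintro ⟨h0, h1⟩
      refine ⟨fun j => by simpa using h0 j, fun e => by simpa using h1⟩
  rw [hset, simplex_image]

/-! ### More helper lemmas -/

variable {n : ℕ}

/-- Canonical colorings of a bag. -/
def Canon (B : Finset (Fin n)) : Set (Fin n → Fin 3) := {g | resC g B = g}

lemma resC_idem (g : Fin n → Fin 3) (B : Finset (Fin n)) : resC (resC g B) B = resC g B :=
  resC_resC (Finset.Subset.refl B)

lemma card_set_le (S : Set (Fin n → Fin 3)) (iS : Fintype ↥S) (B : Finset (Fin n))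
    (hS : ∀ g ∈ S, resC g B = g) : @Fintype.card ↥S iS ≤ 3 ^ B.card := by
  letI := iS
  have hinj : Function.Injective (fun g : ↥S => fun b : ↥B => g.1 b.1) := by
    intro a b h
    apply Subtype.ext; funext v
    by_cases hv : v ∈ B
    · exact congrFun h ⟨v, hv⟩
    · rw [← hS a.1 a.2, ← hS b.1 b.2]; simp [resC, hv]
  calc Fintype.card ↥S ≤ Fintype.card (↥B → Fin 3) := Fintype.card_le_of_injective _ hinj
    _ = 3 ^ B.card := by simp [Fintype.card_fun]

lemma resC_mem_good {G : SimpleGraph (Fin n)} {t : NiceTree n} {g : Fin n → Fin 3}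
    (hOK : ∀ s : NiceTree n, s.isSubtree t → OKc G s.bag g) : resC g t.verts ∈ Good G t := by
  refine ⟨resC_idem g t.verts, fun s hs => ?_⟩
  refine OKc_congr (fun u hu => ?_) (hOK s hs)
  rw [resC_eq_on (NiceTree.bag_subset_of_isSubtree hs hu)]

lemma good_agree_on_verts {G : SimpleGraph (Fin n)} {t : NiceTree n} {g : Fin n → Fin 3}
    (hg : g ∈ Good G t) {u : Fin n} (hu : u ∉ t.verts) : g u = 0 := by
  rw [← hg.1]; simp [resC, hu]

lemma hull_support_delt {W A : Type} [AddCommGroup W] [Module ℝ W] (Γ : Set A)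
    (aa : A → W) (kk : A → (Fin n → Fin 3)) (B : Finset (Fin n))
    (hk : ∀ γ ∈ Γ, resC (kk γ) B = kk γ) :
    ∀ p ∈ convexHull ℝ ((fun γ => (aa γ, delt (kk γ))) '' Γ),
      ∀ h, h ∉ Canon B → p.2 h = 0 := by
  intro p hp h hh
  refine hull_eval_eq (fun q hq => ?_) p hp
  obtain ⟨γ, hγ, rfl⟩ := hq
  show delt (kk γ) h = 0
  rw [delt]
  exact if_neg fun he => hh (show resC h B = h by rw [he]; exact hk γ hγ)

lemma mulVecLin_delt_eval {α : Type} [Fintype α]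
    (M : Matrix α (Fin n → Fin 3) ℝ) (k₀ : Fin n → Fin 3) (a : α) :
    Matrix.mulVecLin M (delt k₀) a = M a k₀ := by
  show (M.mulVec (delt k₀)) a = M a k₀
  rw [Matrix.mulVec]
  show ∑ k, M a k * delt k₀ k = M a k₀
  have : ∀ k, M a k * delt k₀ k = if k = k₀ then M a k else 0 := by
    intro k
    rw [delt]
    by_cases h : k = k₀
    · rw [if_pos h, if_pos h, mul_one]
    · rw [if_neg h, if_neg h, mul_zero]
  rw [Finset.sum_congr rfl fun k _ => this k, Finset.sum_ite_eq' Finset.univ k₀ (M a)]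
  simp

/-- Gluing two colorings along the first vertex set. -/
def glueC (V₁ : Finset (Fin n)) (g₁ g₂ : Fin n → Fin 3) : Fin n → Fin 3 :=
  fun u => if u ∈ V₁ then g₁ u else g₂ u

/-- Extending a coloring by the value of a bag coloring at the new vertex. -/
def extendC (v : Fin n) (k g : Fin n → Fin 3) : Fin n → Fin 3 :=
  fun u => if u = v then k v else g u

lemma join_glue_good {G : SimpleGraph (Fin n)} {t₁ t₂ : NiceTree n}
    (hbag : t₁.bag = t₂.bag) (hint : t₁.verts ∩ t₂.verts ⊆ t₁.bag)
    {g₁ g₂ : Fin n → Fin 3} (h₁ : g₁ ∈ Good G t₁) (h₂ : g₂ ∈ Good G t₂)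
    (hk : resC g₁ t₁.bag = resC g₂ t₂.bag) :
    glueC t₁.verts g₁ g₂ ∈ Good G (t₁.join t₂) ∧
    resC (glueC t₁.verts g₁ g₂) t₁.verts = g₁ ∧
    resC (glueC t₁.verts g₁ g₂) t₂.verts = g₂ := by
  have hagree : ∀ u ∈ t₁.bag, g₁ u = g₂ u := by
    intro u hu
    have h2u : u ∈ t₂.bag := hbag ▸ hu
    have := congrFun hk u
    rwa [resC_eq_on hu, resC_eq_on h2u] at this
  set g := glueC t₁.verts g₁ g₂ with hgdef
  have hagree_on₁ : ∀ u ∈ t₁.verts, g u = g₁ u := by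
    intro u hu
    rw [hgdef]
    simp [glueC, hu]
  have hres₁ : resC g t₁.verts = g₁ := by
    funext u
    by_cases hu : u ∈ t₁.verts
    · rw [resC_eq_on hu, hagree_on₁ u hu]
    · have : g₁ u = 0 := good_agree_on_verts h₁ hu
      rw [this]
      simp [resC, hu]
  have hres₂ : resC g t₂.verts = g₂ := by
    funext u
    by_cases hu : u ∈ t₂.verts
    · rw [resC_eq_on hu]
      by_cases hu1 : u ∈ t₁.verts
      · have hub : u ∈ t₁.bag := hint (Finset.mem_inter.mpr ⟨hu1, hu⟩)
        rw [hagree_on₁ u hu1]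
        exact hagree u hub
      · rw [hgdef]; simp [glueC, hu1]
    · have : g₂ u = 0 := good_agree_on_verts h₂ hu
      rw [this]
      simp [resC, hu]
  have hagree_on₂ : ∀ u ∈ t₂.verts, g u = g₂ u := by
    intro u hu
    rw [← hres₂, resC_eq_on hu]
  refine ⟨⟨?_, ?_⟩, hres₁, hres₂⟩
  · show resC g (t₁.join t₂).verts = g
    funext u
    by_cases hu : u ∈ t₁.verts ∪ t₂.verts
    · exact resC_eq_on hu
    · rw [Finset.mem_union] at hu
      push_neg at hu
      have hg0 : g u = 0 := by
        rw [hgdef]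
        simp only [glueC, if_neg hu.1]
        exact good_agree_on_verts h₂ hu.2
      rw [hg0]
      show (if u ∈ (t₁.join t₂).verts then g u else 0) = 0
      rw [hg0]
      simp
  · rintro s (rfl | hs | hs)
    · show OKc G t₁.bag g
      refine OKc_congr (fun u hu => ?_) (h₁.2 t₁ (NiceTree.isSubtree_refl _))
      exact (hagree_on₁ u (NiceTree.bag_subset_verts t₁ hu)).symm
    · refine OKc_congr (fun u hu => ?_) (h₁.2 s hs)
      exact (hagree_on₁ u (NiceTree.bag_subset_of_isSubtree hs hu)).symm
    · refine OKc_congr (fun u hu => ?_) (h₂.2 s hs)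
      exact (hagree_on₂ u (NiceTree.bag_subset_of_isSubtree hs hu)).symm

lemma join_restrict_good {G : SimpleGraph (Fin n)} {t₁ t₂ : NiceTree n}
    {g : Fin n → Fin 3} (hg : g ∈ Good G (t₁.join t₂)) :
    resC g t₁.verts ∈ Good G t₁ ∧ resC g t₂.verts ∈ Good G t₂ :=
  ⟨resC_mem_good fun s hs => hg.2 s (Or.inr (Or.inl hs)),
   resC_mem_good fun s hs => hg.2 s (Or.inr (Or.inr hs))⟩

lemma intro_extend_good {G : SimpleGraph (Fin n)} {t₀ : NiceTree n} {v : Fin n}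
    (hvv : v ∉ t₀.verts) {g₀ k : Fin n → Fin 3} (h₀ : g₀ ∈ Good G t₀)
    (hkc : resC k (insert v t₀.bag) = k) (hkOK : OKc G (insert v t₀.bag) k)
    (hkey : resC g₀ t₀.bag = resC k t₀.bag) :
    extendC v k g₀ ∈ Good G (NiceTree.introduce v t₀) ∧
    resC (extendC v k g₀) t₀.verts = g₀ ∧
    resC (extendC v k g₀) (insert v t₀.bag) = k := by
  set g := extendC v k g₀ with hg
  have hbag₀verts : t₀.bag ⊆ t₀.verts := NiceTree.bag_subset_verts t₀
  have hagree₀ : ∀ u ∈ t₀.verts, g u = g₀ u := by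
    intro u hu
    have hne : u ≠ v := fun he => hvv (he ▸ hu)
    rw [hg]
    simp [extendC, hne]
  have hagreek : ∀ u ∈ insert v t₀.bag, g u = k u := by
    intro u hu
    rcases Finset.mem_insert.mp hu with rfl | hu'
    · rw [hg]; simp [extendC]
    · have hne : u ≠ v := fun he => hvv (he ▸ hbag₀verts hu')
      rw [hg]
      simp only [extendC, if_neg hne]
      have := congrFun hkey u
      rwa [resC_eq_on hu', resC_eq_on hu'] at this
  have hres₀ : resC g t₀.verts = g₀ := by
    funext u
    by_cases hu : u ∈ t₀.verts
    · rw [resC_eq_on hu]; exact hagree₀ u hu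
    · rw [good_agree_on_verts h₀ hu]; simp [resC, hu]
  have hresk : resC g (insert v t₀.bag) = k := by
    funext u
    by_cases hu : u ∈ insert v t₀.bag
    · rw [resC_eq_on hu]; exact hagreek u hu
    · have hk0 : k u = 0 := by rw [← hkc]; simp [resC, hu]
      rw [hk0]; simp [resC, hu]
  refine ⟨⟨?_, ?_⟩, hres₀, hresk⟩
  · show resC g (insert v t₀.verts) = g
    funext u
    by_cases hu : u ∈ insert v t₀.verts
    · exact resC_eq_on hu
    · rw [Finset.mem_insert] at hu
      push_neg at hu
      have hg0 : g u = 0 := by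
        rw [hg]
        simp only [extendC, if_neg hu.1]
        exact good_agree_on_verts h₀ hu.2
      rw [hg0]
      simp [resC, Finset.mem_insert, hu.1, hu.2]
  · rintro s (rfl | hs)
    · show OKc G (insert v t₀.bag) g
      exact OKc_congr (fun u hu => (hagreek u hu).symm) hkOK
    · exact OKc_congr
        (fun u hu => (hagree₀ u (NiceTree.bag_subset_of_isSubtree hs hu)).symm) (h₀.2 s hs)

lemma intro_restrict_good {G : SimpleGraph (Fin n)} {t₀ : NiceTree n} {v : Fin n}
    {g : Fin n → Fin 3} (hg : g ∈ Good G (NiceTree.introduce v t₀)) :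
    resC g t₀.verts ∈ Good G t₀ ∧
    resC (resC g (insert v t₀.bag)) (insert v t₀.bag) = resC g (insert v t₀.bag) ∧
    OKc G (insert v t₀.bag) (resC g (insert v t₀.bag)) := by
  refine ⟨resC_mem_good fun s hs => hg.2 s (Or.inr hs), resC_idem _ _, ?_⟩
  refine OKc_congr (fun u hu => (resC_eq_on hu).symm)
    (hg.2 (NiceTree.introduce v t₀) (NiceTree.isSubtree_refl _))

/-- The inductive invariant: an extended formulation of the "local colorings"
polytope of a subtree, of the appropriate size. -/
def GoodLP (G : SimpleGraph (Fin n)) (τ : ℕ) (t : NiceTree n) : Prop :=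
  ∃ (V R E : Type) (iV : Fintype V) (iR : Fintype R) (iE : Fintype E)
    (a : R → (V → ℝ) →ₗ[ℝ] ℝ) (b : R → ℝ) (c : E → (V → ℝ) →ₗ[ℝ] ℝ) (d : E → ℝ)
    (π : (V → ℝ) →ₗ[ℝ] OutSp n),
    @Fintype.card V iV ≤ 3 ^ (τ + 1) * t.size ∧
    @Fintype.card R iR + @Fintype.card E iE ≤ 5 * 3 ^ (τ + 1) * t.size ∧
    π '' SolSet a b c d = convexHull ℝ (outF t '' Good G t)

theorem main_induction (G : SimpleGraph (Fin n)) (τ : ℕ) (t : NiceTree n)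
    (hv : t.valid) (hb : ∀ s : NiceTree n, s.isSubtree t → s.bag.card ≤ τ + 1) :
    GoodLP G τ t := by
  have h3 : 1 ≤ 3 ^ (τ + 1) := Nat.one_le_pow _ _ (by norm_num)
  induction t with
  | leaf v =>
      letI iJ : Fintype ↥(Good G (NiceTree.leaf v)) := (Set.toFinite _).fintype
      obtain ⟨a, b, c, d, π, him⟩ :=
        simplex_system (fun j : ↥(Good G (NiceTree.leaf v)) => outF (NiceTree.leaf v) j.1)
      have hJ : Fintype.card ↥(Good G (NiceTree.leaf v)) ≤ 3 ^ (τ + 1) := by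
      -- card bound via the bag {v}
        have h1 : Fintype.card ↥(Good G (NiceTree.leaf v))
            ≤ 3 ^ ((NiceTree.leaf v : NiceTree n).verts).card :=
          card_set_le (Good G (NiceTree.leaf v)) iJ _ fun g hg => hg.1
        refine h1.trans (Nat.pow_le_pow_right (by norm_num) ?_)
        exact hb _ (NiceTree.isSubtree_refl _)
      refine ⟨_, _, _, iJ, iJ, inferInstance, a, b, c, d, π, ?_, ?_, ?_⟩
      · simpa [NiceTree.size] using hJ
      · have : Fintype.card Unit = 1 := rfl
        simp only [NiceTree.size, this]
        omega
      · rw [him, ← Set.image_eq_range]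
  | introduce v t₀ ih =>
      obtain ⟨hvv, hv₀⟩ := hv
      have hb₀ : ∀ s : NiceTree n, s.isSubtree t₀ → s.bag.card ≤ τ + 1 :=
        fun s hs => hb s (Or.inr hs)
      obtain ⟨V₁, R₁, E₁, iV₁, iR₁, iE₁, a₁, b₁, c₁, d₁, π₁, hcV₁, hcRE₁, him₁⟩ := ih hv₀ hb₀
      letI := iV₁; letI := iR₁; letI := iE₁
      set K : Set (Fin n → Fin 3) :=
        {k | resC k (insert v t₀.bag) = k ∧ OKc G (insert v t₀.bag) k} with hK
      letI iK : Fintype ↥K := (Set.toFinite _).fintype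
      letI iC : Fintype ↥(Canon t₀.bag) := (Set.toFinite _).fintype
      set aI : (Fin n → Fin 3) → ℝ × ((Fin n → Fin 3) → ℝ) :=
        fun k => (if k v = 2 then (1:ℝ) else 0, delt k) with haI
      obtain ⟨a₂, b₂, c₂, d₂, π₂, him₂⟩ :=
        simplex_system (fun k : ↥K => (aI k.1, delt (resC k.1 t₀.bag)))
      have him₂' : ⇑π₂ '' SolSet a₂ b₂ c₂ d₂
          = convexHull ℝ ((fun k => (aI k, delt (resC k t₀.bag))) '' K) :=
        him₂.trans (congrArg (convexHull ℝ) (Set.image_eq_range (fun k => (aI k, delt (resC k t₀.bag))) K).symm)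
      have him₁' : ⇑π₁ '' SolSet a₁ b₁ c₁ d₁
          = convexHull ℝ ((fun γ => (xvec t₀ γ, delt (resC γ t₀.bag))) '' Good G t₀) := him₁
      have hsup₁ := hull_support_delt (Good G t₀) (xvec t₀) (fun γ => resC γ t₀.bag) t₀.bag
        (fun γ _ => resC_idem γ t₀.bag)
      have hsup₂ := hull_support_delt K aI (fun k => resC k t₀.bag) t₀.bag
        (fun k _ => resC_idem k t₀.bag)
      obtain ⟨a, b, c, d, Ψ, hΨ⟩ := combine a₁ b₁ c₁ d₁ a₂ b₂ c₂ d₂ π₁ π₂ _ _ (Canon t₀.bag)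
        him₁' him₂' hsup₁ hsup₂
      have hΨ' := hΨ.trans (glue_lemma (Good G t₀) K (xvec t₀) aI
        (fun γ => resC γ t₀.bag) (fun k => resC k t₀.bag))
      set indv : Fin n → ℝ := fun u => if u = v then 1 else 0 with hindv
      set q2 : ((Fin n → ℝ) × (ℝ × ((Fin n → Fin 3) → ℝ)) × ((Fin n → Fin 3) → ℝ))
            →ₗ[ℝ] ℝ × ((Fin n → Fin 3) → ℝ) :=
        (LinearMap.fst ℝ (ℝ × ((Fin n → Fin 3) → ℝ)) ((Fin n → Fin 3) → ℝ)).comp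
          (LinearMap.snd ℝ (Fin n → ℝ)
            ((ℝ × ((Fin n → Fin 3) → ℝ)) × ((Fin n → Fin 3) → ℝ))) with hq2
      set M : ((Fin n → ℝ) × (ℝ × ((Fin n → Fin 3) → ℝ)) × ((Fin n → Fin 3) → ℝ))
            →ₗ[ℝ] OutSp n :=
        ((LinearMap.fst ℝ (Fin n → ℝ) ((ℝ × ((Fin n → Fin 3) → ℝ)) × ((Fin n → Fin 3) → ℝ)))
          + ((LinearMap.fst ℝ ℝ ((Fin n → Fin 3) → ℝ)).comp q2).smulRight indv).prod
          ((LinearMap.snd ℝ ℝ ((Fin n → Fin 3) → ℝ)).comp q2) with hM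
      have hMapp : ∀ (x : Fin n → ℝ) (r : ℝ) (ν μ : (Fin n → Fin 3) → ℝ),
          M (x, (r, ν), μ) = (x + r • indv, ν) := fun _ _ _ _ => rfl
      have hcomp : ∀ g ∈ Good G (NiceTree.introduce v t₀),
          M (xvec t₀ (resC g t₀.verts), aI (resC g (insert v t₀.bag)), delt (resC g t₀.bag))
            = outF (NiceTree.introduce v t₀) g := by
        intro g hg
        rw [haI]
        rw [hMapp]
        apply Prod.ext
        · show xvec t₀ (resC g t₀.verts)
              + (if resC g (insert v t₀.bag) v = 2 then (1:ℝ) else 0) • indv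
            = xvec (NiceTree.introduce v t₀) g
          have hgv : resC g (insert v t₀.bag) v = g v :=
            resC_eq_on (Finset.mem_insert_self v t₀.bag)
          rw [hgv]
          funext u
          show xvec t₀ (resC g t₀.verts) u
              + (if g v = 2 then (1:ℝ) else 0) * indv u
            = xvec (NiceTree.introduce v t₀) g u
          have hvi : (NiceTree.introduce v t₀).verts = insert v t₀.verts := rfl
          by_cases hu : u = v
          · subst hu
            by_cases hgu : g u = 2 <;>
              simp [xvec, hindv, resC, hvi, hvv, hgu, Finset.mem_insert]
          · by_cases hu0 : u ∈ t₀.verts <;> by_cases hgu : g u = 2 <;>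
              simp [xvec, hindv, resC, hvi, hu, hu0, hgu, Finset.mem_insert]
        · rfl
      have himage : ⇑M '' ((fun q : (Fin n → Fin 3) × (Fin n → Fin 3) =>
            (xvec t₀ q.1, aI q.2, delt (resC q.1 t₀.bag))) ''
            {q : (Fin n → Fin 3) × (Fin n → Fin 3) | q.1 ∈ Good G t₀ ∧ q.2 ∈ K ∧
              resC q.1 t₀.bag = resC q.2 t₀.bag})
          = outF (NiceTree.introduce v t₀) '' Good G (NiceTree.introduce v t₀) := by
        rw [Set.image_image]
        apply Set.Subset.antisymm
        · rintro _ ⟨⟨g₀, k⟩, ⟨hg₀, hk, hkq⟩, rfl⟩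
          obtain ⟨hgood, hres₀, hresk⟩ := intro_extend_good hvv hg₀ hk.1 hk.2 hkq
          refine ⟨extendC v k g₀, hgood, ?_⟩
          have hkey3 : resC (extendC v k g₀) t₀.bag = resC g₀ t₀.bag := by
            have := congrArg (fun x => resC x t₀.bag) hres₀
            dsimp only at this
            rwa [resC_resC (NiceTree.bag_subset_verts t₀)] at this
          rw [← hcomp _ hgood, hres₀, hresk, hkey3]
        · rintro _ ⟨g, hg, rfl⟩
          obtain ⟨hg₀, hkc, hkOK⟩ := intro_restrict_good hg
          refine ⟨(resC g t₀.verts, resC g (insert v t₀.bag)), ⟨hg₀, ⟨hkc, hkOK⟩, ?_⟩, ?_⟩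
          · show resC (resC g t₀.verts) t₀.bag = resC (resC g (insert v t₀.bag)) t₀.bag
            rw [resC_resC (NiceTree.bag_subset_verts t₀),
              resC_resC (Finset.subset_insert v t₀.bag)]
          · show M (xvec t₀ (resC g t₀.verts), aI (resC g (insert v t₀.bag)),
                delt (resC (resC g t₀.verts) t₀.bag)) = outF (NiceTree.introduce v t₀) g
            rw [resC_resC (NiceTree.bag_subset_verts t₀)]
            exact hcomp g hg
      have hKcard : Fintype.card ↥K ≤ 3 ^ (τ + 1) := by
        refine (card_set_le K iK (insert v t₀.bag) fun k hk => hk.1).trans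
          (Nat.pow_le_pow_right (by norm_num) ?_)
        exact hb (NiceTree.introduce v t₀) (NiceTree.isSubtree_refl _)
      refine ⟨V₁ ⊕ ↥K, R₁ ⊕ ↥K, (E₁ ⊕ Unit) ⊕ ↥(Canon t₀.bag), inferInstance, inferInstance,
        inferInstance, a, b, c, d, M.comp Ψ, ?_, ?_, ?_⟩
      · show Fintype.card (V₁ ⊕ ↥K) ≤ 3 ^ (τ + 1) * (NiceTree.introduce v t₀).size
        rw [Fintype.card_sum]
        have hs : (NiceTree.introduce v t₀).size = t₀.size + 1 := rfl
        rw [hs, Nat.mul_add, Nat.mul_one]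
        omega
      · show Fintype.card (R₁ ⊕ ↥K) + Fintype.card ((E₁ ⊕ Unit) ⊕ ↥(Canon t₀.bag))
            ≤ 5 * 3 ^ (τ + 1) * (NiceTree.introduce v t₀).size
        rw [Fintype.card_sum, Fintype.card_sum, Fintype.card_sum]
        have hC : Fintype.card ↥(Canon t₀.bag) ≤ 3 ^ (τ + 1) := by
          refine (card_set_le (Canon t₀.bag) iC t₀.bag fun g hg => hg).trans
            (Nat.pow_le_pow_right (by norm_num) ?_)
          exact (Finset.card_le_card (Finset.subset_insert v t₀.bag)).trans
            (hb (NiceTree.introduce v t₀) (NiceTree.isSubtree_refl _))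
        have hU : Fintype.card Unit = 1 := rfl
        have hs : (NiceTree.introduce v t₀).size = t₀.size + 1 := rfl
        rw [hs, hU, Nat.mul_add, Nat.mul_one]
        omega
      · calc ⇑(M.comp Ψ) '' SolSet a b c d = ⇑M '' (⇑Ψ '' SolSet a b c d) := by
              rw [← Set.image_comp]
              rfl
          _ = ⇑M '' convexHull ℝ ((fun q : (Fin n → Fin 3) × (Fin n → Fin 3) =>
                (xvec t₀ q.1, aI q.2, delt (resC q.1 t₀.bag))) ''
                {q : (Fin n → Fin 3) × (Fin n → Fin 3) | q.1 ∈ Good G t₀ ∧ q.2 ∈ K ∧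
                  resC q.1 t₀.bag = resC q.2 t₀.bag}) := by rw [hΨ']
          _ = convexHull ℝ (⇑M '' ((fun q : (Fin n → Fin 3) × (Fin n → Fin 3) =>
                (xvec t₀ q.1, aI q.2, delt (resC q.1 t₀.bag))) ''
                {q : (Fin n → Fin 3) × (Fin n → Fin 3) | q.1 ∈ Good G t₀ ∧ q.2 ∈ K ∧
                  resC q.1 t₀.bag = resC q.2 t₀.bag})) := M.image_convexHull _
          _ = convexHull ℝ (outF (NiceTree.introduce v t₀)
                '' Good G (NiceTree.introduce v t₀)) := by rw [himage]
  | forget v t₀ ih =>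
      obtain ⟨hvbag, hv₀⟩ := hv
      have hb₀ : ∀ s : NiceTree n, s.isSubtree t₀ → s.bag.card ≤ τ + 1 :=
        fun s hs => hb s (Or.inr hs)
      obtain ⟨V, R, E, iV, iR, iE, a, b, c, d, π, hcV, hcRE, him⟩ := ih hv₀ hb₀
      -- the linear map merging configurations of the child bag
      set B' : Finset (Fin n) := (t₀.bag).erase v with hB'
      set L : OutSp n →ₗ[ℝ] OutSp n :=
        (LinearMap.fst ℝ (Fin n → ℝ) ((Fin n → Fin 3) → ℝ)).prod
          ((Matrix.mulVecLin (fun h k => if resC k B' = h then (1:ℝ) else 0)).comp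
            (LinearMap.snd ℝ (Fin n → ℝ) ((Fin n → Fin 3) → ℝ))) with hL
      have hLout : ∀ g ∈ Good G t₀, L (outF t₀ g) = outF (NiceTree.forget v t₀) g := by
        intro g _
        rw [hL]
        apply Prod.ext
        · rfl
        · show Matrix.mulVecLin _ (delt (resC g t₀.bag)) = delt (resC g B')
          funext h
          refine (mulVecLin_delt_eval (fun h k => if resC k B' = h then (1:ℝ) else 0)
            (resC g t₀.bag) h).trans ?_
          show (if resC (resC g t₀.bag) B' = h then (1:ℝ) else 0) = delt (resC g B') h
          rw [resC_resC (Finset.erase_subset _ _), delt]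
          exact if_congr eq_comm rfl rfl
      have hGood : Good G (NiceTree.forget v t₀) = Good G t₀ := by
        ext g
        constructor
        · rintro ⟨h1, h2⟩
          exact ⟨h1, fun s hs => h2 s (Or.inr hs)⟩
        · rintro ⟨h1, h2⟩
          refine ⟨h1, fun s hs => ?_⟩
          rcases hs with rfl | hs
          · exact OKc_mono (Finset.erase_subset _ _) (h2 t₀ (NiceTree.isSubtree_refl _))
          · exact h2 s hs
      refine ⟨V, R, E, iV, iR, iE, a, b, c, d, L.comp π, ?_, ?_, ?_⟩
      · exact hcV.trans (Nat.mul_le_mul_left _ (by simp [NiceTree.size]))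
      · exact hcRE.trans (Nat.mul_le_mul_left _ (by simp [NiceTree.size]))
      · calc (L.comp π) '' SolSet a b c d = L '' (π '' SolSet a b c d) := by
              rw [← Set.image_comp]
              rfl
          _ = L '' convexHull ℝ (outF t₀ '' Good G t₀) := by rw [him]
          _ = convexHull ℝ (L '' (outF t₀ '' Good G t₀)) := L.image_convexHull _
          _ = convexHull ℝ (outF (NiceTree.forget v t₀) '' Good G (NiceTree.forget v t₀)) := by
              rw [Set.image_image, hGood]
              exact congrArg _ (Set.image_congr hLout)
  | join t₁ t₂ ih₁ ih₂ =>
      obtain ⟨hbag, hint, hv₁, hv₂⟩ := hv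
      have hb₁ : ∀ s : NiceTree n, s.isSubtree t₁ → s.bag.card ≤ τ + 1 :=
        fun s hs => hb s (Or.inr (Or.inl hs))
      have hb₂ : ∀ s : NiceTree n, s.isSubtree t₂ → s.bag.card ≤ τ + 1 :=
        fun s hs => hb s (Or.inr (Or.inr hs))
      obtain ⟨V₁, R₁, E₁, iV₁, iR₁, iE₁, a₁, b₁, c₁, d₁, π₁, hcV₁, hcRE₁, him₁⟩ := ih₁ hv₁ hb₁
      obtain ⟨V₂, R₂, E₂, iV₂, iR₂, iE₂, a₂, b₂, c₂, d₂, π₂, hcV₂, hcRE₂, him₂⟩ := ih₂ hv₂ hb₂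
      letI := iV₁; letI := iV₂; letI := iR₁; letI := iR₂; letI := iE₁; letI := iE₂
      letI iC : Fintype ↥(Canon t₁.bag) := (Set.toFinite _).fintype
      have him₁' : ⇑π₁ '' SolSet a₁ b₁ c₁ d₁
          = convexHull ℝ ((fun γ => (xvec t₁ γ, delt (resC γ t₁.bag))) '' Good G t₁) := him₁
      have him₂' : ⇑π₂ '' SolSet a₂ b₂ c₂ d₂
          = convexHull ℝ ((fun γ => (xvec t₂ γ, delt (resC γ t₂.bag))) '' Good G t₂) := him₂
      have hsup₁ := hull_support_delt (Good G t₁) (xvec t₁) (fun γ => resC γ t₁.bag) t₁.bag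
        (fun γ _ => resC_idem γ t₁.bag)
      have hsup₂ := hull_support_delt (Good G t₂) (xvec t₂) (fun γ => resC γ t₂.bag) t₁.bag
        (fun γ _ => by rw [hbag]; exact resC_idem γ t₂.bag)
      obtain ⟨a, b, c, d, Ψ, hΨ⟩ := combine a₁ b₁ c₁ d₁ a₂ b₂ c₂ d₂ π₁ π₂ _ _ (Canon t₁.bag)
        him₁' him₂' hsup₁ hsup₂
      have hΨ' := hΨ.trans (glue_lemma (Good G t₁) (Good G t₂) (xvec t₁) (xvec t₂)
        (fun γ => resC γ t₁.bag) (fun γ => resC γ t₂.bag))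
      set cmat : Matrix (Fin n) (Fin n → Fin 3) ℝ :=
        fun u k => if u ∈ t₁.verts ∩ t₂.verts ∧ k u = 2 then 1 else 0 with hcmat
      set M : ((Fin n → ℝ) × (Fin n → ℝ) × ((Fin n → Fin 3) → ℝ)) →ₗ[ℝ] OutSp n :=
        ((LinearMap.fst ℝ (Fin n → ℝ) ((Fin n → ℝ) × ((Fin n → Fin 3) → ℝ)))
          + (LinearMap.fst ℝ (Fin n → ℝ) ((Fin n → Fin 3) → ℝ)).comp
              (LinearMap.snd ℝ (Fin n → ℝ) ((Fin n → ℝ) × ((Fin n → Fin 3) → ℝ)))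
          - (Matrix.mulVecLin cmat).comp
              ((LinearMap.snd ℝ (Fin n → ℝ) ((Fin n → Fin 3) → ℝ)).comp
                (LinearMap.snd ℝ (Fin n → ℝ) ((Fin n → ℝ) × ((Fin n → Fin 3) → ℝ))))).prod
          ((LinearMap.snd ℝ (Fin n → ℝ) ((Fin n → Fin 3) → ℝ)).comp
            (LinearMap.snd ℝ (Fin n → ℝ) ((Fin n → ℝ) × ((Fin n → Fin 3) → ℝ)))) with hM
      have hMapp : ∀ x₁ x₂ : Fin n → ℝ, ∀ μ : (Fin n → Fin 3) → ℝ,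
          M (x₁, x₂, μ) = (x₁ + x₂ - Matrix.mulVecLin cmat μ, μ) := fun _ _ _ => rfl
      have hcomp : ∀ g ∈ Good G (t₁.join t₂),
          M (xvec t₁ (resC g t₁.verts), xvec t₂ (resC g t₂.verts), delt (resC g t₁.bag))
            = outF (t₁.join t₂) g := by
        intro g hg
        rw [hMapp]
        apply Prod.ext
        · show xvec t₁ (resC g t₁.verts) + xvec t₂ (resC g t₂.verts)
            - Matrix.mulVecLin cmat (delt (resC g t₁.bag)) = xvec (t₁.join t₂) g
          funext u
          show xvec t₁ (resC g t₁.verts) u + xvec t₂ (resC g t₂.verts) u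
              - Matrix.mulVecLin cmat (delt (resC g t₁.bag)) u = xvec (t₁.join t₂) g u
          rw [mulVecLin_delt_eval]
          have hvj : (t₁.join t₂).verts = t₁.verts ∪ t₂.verts := rfl
          by_cases h1 : u ∈ t₁.verts <;> by_cases h2 : u ∈ t₂.verts <;>
            by_cases hgu : g u = 2
          · have hub : u ∈ t₁.bag := hint (Finset.mem_inter.mpr ⟨h1, h2⟩)
            simp [xvec, hcmat, hvj, resC, h1, h2, hgu, hub, Finset.mem_inter, Finset.mem_union]
          · have hub : u ∈ t₁.bag := hint (Finset.mem_inter.mpr ⟨h1, h2⟩)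
            simp [xvec, hcmat, hvj, resC, h1, h2, hgu, hub, Finset.mem_inter, Finset.mem_union]
          · simp [xvec, hcmat, hvj, resC, h1, h2, hgu, Finset.mem_inter, Finset.mem_union]
          · simp [xvec, hcmat, hvj, resC, h1, h2, hgu, Finset.mem_inter, Finset.mem_union]
          · simp [xvec, hcmat, hvj, resC, h1, h2, hgu, Finset.mem_inter, Finset.mem_union]
          · simp [xvec, hcmat, hvj, resC, h1, h2, hgu, Finset.mem_inter, Finset.mem_union]
          · simp [xvec, hcmat, hvj, resC, h1, h2, hgu, Finset.mem_inter, Finset.mem_union]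
          · simp [xvec, hcmat, hvj, resC, h1, h2, hgu, Finset.mem_inter, Finset.mem_union]
        · rfl
      have himage : ⇑M '' ((fun q : (Fin n → Fin 3) × (Fin n → Fin 3) =>
            (xvec t₁ q.1, xvec t₂ q.2, delt (resC q.1 t₁.bag))) ''
            {q : (Fin n → Fin 3) × (Fin n → Fin 3) | q.1 ∈ Good G t₁ ∧ q.2 ∈ Good G t₂ ∧
              resC q.1 t₁.bag = resC q.2 t₂.bag})
          = outF (t₁.join t₂) '' Good G (t₁.join t₂) := by
        rw [Set.image_image]
        apply Set.Subset.antisymm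
        · rintro _ ⟨⟨g₁, g₂⟩, ⟨hg₁, hg₂, hkq⟩, rfl⟩
          obtain ⟨hgood, hres₁, hres₂⟩ := join_glue_good hbag hint hg₁ hg₂ hkq
          refine ⟨glueC t₁.verts g₁ g₂, hgood, ?_⟩
          have hkey3 : resC (glueC t₁.verts g₁ g₂) t₁.bag = resC g₁ t₁.bag := by
            have := congrArg (fun x => resC x t₁.bag) hres₁
            dsimp only at this
            rwa [resC_resC (NiceTree.bag_subset_verts t₁)] at this
          rw [← hcomp _ hgood, hres₁, hres₂, hkey3]
        · rintro _ ⟨g, hg, rfl⟩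
          obtain ⟨hg₁, hg₂⟩ := join_restrict_good hg
          refine ⟨(resC g t₁.verts, resC g t₂.verts), ⟨hg₁, hg₂, ?_⟩, ?_⟩
          · show resC (resC g t₁.verts) t₁.bag = resC (resC g t₂.verts) t₂.bag
            rw [resC_resC (NiceTree.bag_subset_verts t₁),
              resC_resC (NiceTree.bag_subset_verts t₂), hbag]
          · show M (xvec t₁ (resC g t₁.verts), xvec t₂ (resC g t₂.verts),
                delt (resC (resC g t₁.verts) t₁.bag)) = outF (t₁.join t₂) g
            rw [resC_resC (NiceTree.bag_subset_verts t₁)]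
            exact hcomp g hg
      refine ⟨V₁ ⊕ V₂, R₁ ⊕ R₂, (E₁ ⊕ E₂) ⊕ ↥(Canon t₁.bag), inferInstance, inferInstance,
        inferInstance, a, b, c, d, M.comp Ψ, ?_, ?_, ?_⟩
      · show Fintype.card (V₁ ⊕ V₂) ≤ 3 ^ (τ + 1) * (t₁.join t₂).size
        rw [Fintype.card_sum]
        have hs : (t₁.join t₂).size = t₁.size + t₂.size + 1 := rfl
        rw [hs, Nat.mul_add, Nat.mul_add, Nat.mul_one]
        omega
      · show Fintype.card (R₁ ⊕ R₂) + Fintype.card ((E₁ ⊕ E₂) ⊕ ↥(Canon t₁.bag))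
            ≤ 5 * 3 ^ (τ + 1) * (t₁.join t₂).size
        rw [Fintype.card_sum, Fintype.card_sum, Fintype.card_sum]
        have hC : Fintype.card ↥(Canon t₁.bag) ≤ 3 ^ (τ + 1) := by
          refine (card_set_le (Canon t₁.bag) iC t₁.bag fun g hg => hg).trans
            (Nat.pow_le_pow_right (by norm_num) ?_)
          exact hb (t₁.join t₂) (NiceTree.isSubtree_refl _)
        have hs : (t₁.join t₂).size = t₁.size + t₂.size + 1 := rfl
        rw [hs, Nat.mul_add, Nat.mul_add, Nat.mul_one]
        omega
      · calc ⇑(M.comp Ψ) '' SolSet a b c d = ⇑M '' (⇑Ψ '' SolSet a b c d) := by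
              rw [← Set.image_comp]
              rfl
          _ = ⇑M '' convexHull ℝ ((fun q : (Fin n → Fin 3) × (Fin n → Fin 3) =>
                (xvec t₁ q.1, xvec t₂ q.2, delt (resC q.1 t₁.bag))) ''
                {q : (Fin n → Fin 3) × (Fin n → Fin 3) | q.1 ∈ Good G t₁ ∧ q.2 ∈ Good G t₂ ∧
                  resC q.1 t₁.bag = resC q.2 t₂.bag}) := by rw [hΨ']
          _ = convexHull ℝ (⇑M '' ((fun q : (Fin n → Fin 3) × (Fin n → Fin 3) =>
                (xvec t₁ q.1, xvec t₂ q.2, delt (resC q.1 t₁.bag))) ''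
                {q : (Fin n → Fin 3) × (Fin n → Fin 3) | q.1 ∈ Good G t₁ ∧ q.2 ∈ Good G t₂ ∧
                  resC q.1 t₁.bag = resC q.2 t₂.bag})) := M.image_convexHull _
          _ = convexHull ℝ (outF (t₁.join t₂) '' Good G (t₁.join t₂)) := by rw [himage]


lemma functional_eq {V : Type} (iV : Fintype V) {m : ℕ} (e : V ≃ Fin m)
    (f : (V → ℝ) →ₗ[ℝ] ℝ) (x : Fin m → ℝ) :
    f (fun v => x (e v)) = ∑ j : Fin m, f (fun w => if e.symm j = w then 1 else 0) * x j := by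
  letI := iV
  have hy : (fun v => x (e v)) = ∑ v : V, x (e v) • (fun w => if v = w then (1:ℝ) else 0) :=
    pi_eq_sum_univ _
  rw [hy, map_sum]
  have h1 : ∀ v : V, f (x (e v) • fun w => if v = w then (1:ℝ) else 0)
      = x (e v) * f (fun w => if v = w then 1 else 0) := by
    intro v
    rw [map_smul, smul_eq_mul]
  rw [Finset.sum_congr rfl fun v _ => h1 v]
  rw [← Equiv.sum_comp e.symm (fun v => x (e v) * f (fun w => if v = w then (1:ℝ) else 0))]
  refine Finset.sum_congr rfl fun j _ => ?_
  rw [Equiv.apply_symm_apply, mul_comm]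

/-- The final assembly: converting the abstract linear system into matrix form
and identifying the projected polytope with the OCT polytope. -/
theorem oct_extended_formulation' :
    ∃ c : ℕ, 0 < c ∧
      ∀ (n : ℕ) (G : SimpleGraph (Fin n)) (T : NiceTree n) (τ : ℕ),
        IsNiceTreeDecompGraph G T →
        (∀ s : NiceTree n, s.isSubtree T → s.bag.card ≤ τ + 1) →
        ∃ (m p q : ℕ) (A : Matrix (Fin p) (Fin m) ℝ) (bvec : Fin p → ℝ)
          (Cmat : Matrix (Fin q) (Fin m) ℝ) (dvec : Fin q → ℝ)
          (π : (Fin m → ℝ) →ₗ[ℝ] (Fin n → ℝ)),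
          m ≤ c * 3 ^ (τ + 1) * T.size ∧ p + q ≤ c * 3 ^ (τ + 1) * T.size ∧
          π '' {x | A.mulVec x ≤ bvec ∧ Cmat.mulVec x = dvec}
            = convexHull ℝ {x : Fin n → ℝ | ∃ W : Finset (Fin n),
                (∃ κ : Fin n → Bool,
                  ∀ u v : Fin n, G.Adj u v → u ∉ W → v ∉ W → κ u ≠ κ v) ∧
                x = fun v => if v ∈ W then (1 : ℝ) else 0} := by
  refine ⟨5, by norm_num, ?_⟩
  intro n G T τ hdecomp hbags
  obtain ⟨hvalid, hverts, hedges⟩ := hdecomp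
  obtain ⟨V, R, E, iV, iR, iE, a, b, c, d, π, hV, hRE, him⟩ :=
    main_induction G τ T hvalid hbags
  letI := iV; letI := iR; letI := iE
  set m := Fintype.card V with hm
  set p := Fintype.card R with hp
  set q := Fintype.card E with hq
  set eV : V ≃ Fin m := Fintype.equivFin V with heV
  set eR : R ≃ Fin p := Fintype.equivFin R with heR
  set eE : E ≃ Fin q := Fintype.equivFin E with heE
  set ρ : (Fin m → ℝ) →ₗ[ℝ] (V → ℝ) := LinearMap.funLeft ℝ ℝ ⇑eV with hρ
  set A : Matrix (Fin p) (Fin m) ℝ :=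
    fun i j => a (eR.symm i) (fun w => if eV.symm j = w then 1 else 0) with hA
  set Cm : Matrix (Fin q) (Fin m) ℝ :=
    fun i j => c (eE.symm i) (fun w => if eV.symm j = w then 1 else 0) with hCm
  refine ⟨m, p, q, A, fun i => b (eR.symm i), Cm, fun i => d (eE.symm i),
    (LinearMap.fst ℝ (Fin n → ℝ) ((Fin n → Fin 3) → ℝ)).comp (π.comp ρ), ?_, ?_, ?_⟩
  · calc m ≤ 3 ^ (τ + 1) * T.size := hV
      _ ≤ 5 * 3 ^ (τ + 1) * T.size := by
          rw [Nat.mul_assoc]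
          exact Nat.le_mul_of_pos_left _ (by norm_num)
  · exact hRE
  · have hAx : ∀ (x : Fin m → ℝ) (i : Fin p), A.mulVec x i = a (eR.symm i) (ρ x) := by
      intro x i
      show ∑ j, A i j * x j = a (eR.symm i) (fun v => x (eV v))
      rw [functional_eq iV eV]
    have hCx : ∀ (x : Fin m → ℝ) (i : Fin q), Cm.mulVec x i = c (eE.symm i) (ρ x) := by
      intro x i
      show ∑ j, Cm i j * x j = c (eE.symm i) (fun v => x (eV v))
      rw [functional_eq iV eV]
    have hsol : {x : Fin m → ℝ | A.mulVec x ≤ (fun i => b (eR.symm i)) ∧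
          Cm.mulVec x = (fun i => d (eE.symm i))} = ⇑ρ ⁻¹' SolSet a b c d := by
      ext x
      constructor
      · rintro ⟨h1, h2⟩
        constructor
        · intro r
          have := h1 (eR r)
          rw [hAx] at this
          simpa using this
        · intro e
          have := congrFun h2 (eE e)
          rw [hCx] at this
          simpa using this
      · rintro ⟨h1, h2⟩
        constructor
        · intro i
          rw [hAx]
          exact h1 _
        · funext i
          rw [hCx]
          exact h2 _
    have hρsurj : Function.Surjective ⇑ρ := by
      intro y
      refine ⟨fun j => y (eV.symm j), ?_⟩
      funext v
      show y (eV.symm (eV v)) = y v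
      rw [Equiv.symm_apply_apply]
    have hsets : xvec T '' Good G T = {x : Fin n → ℝ | ∃ W : Finset (Fin n),
        (∃ κ : Fin n → Bool,
          ∀ u v : Fin n, G.Adj u v → u ∉ W → v ∉ W → κ u ≠ κ v) ∧
        x = fun v => if v ∈ W then (1 : ℝ) else 0} := by
      ext x
      constructor
      · rintro ⟨g, hg, rfl⟩
        refine ⟨Finset.univ.filter (fun u => g u = 2),
          ⟨fun u => if g u = 1 then true else false, ?_⟩, ?_⟩
        · intro u v hadj hu hv
          rw [Finset.mem_filter] at hu hv
          push_neg at hu hv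
          have hgu : g u ≠ 2 := fun h => hu (Finset.mem_univ u) h
          have hgv : g v ≠ 2 := fun h => hv (Finset.mem_univ v) h
          obtain ⟨s, hs, hus, hvs⟩ := hedges u v hadj
          have hOK := hg.2 s hs
          have hne : g u ≠ g v := fun he => hgu (hOK u hus v hvs hadj he)
          have h01 : ∀ z : Fin 3, z ≠ 2 → z = 0 ∨ z = 1 := by decide
          rcases h01 _ hgu with h | h <;> rcases h01 _ hgv with h' | h' <;>
            simp [h, h'] at hne ⊢
        · funext u
          have hu : u ∈ T.verts := hverts u
          by_cases hgu : g u = 2 <;>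
            simp [xvec, hu, hgu, Finset.mem_filter]
      · rintro ⟨W, ⟨κ, hκ⟩, rfl⟩
        refine ⟨fun u => if u ∈ W then 2 else if κ u then 1 else 0, ⟨?_, ?_⟩, ?_⟩
        · funext u
          exact resC_eq_on (hverts u)
        · intro s hs u hu v hv hadj he
          by_cases huW : u ∈ W
          · simp [huW]
          · by_cases hvW : v ∈ W
            · simp only [if_neg huW] at he ⊢
              rw [he]
              simp [hvW]
            · have := hκ u v hadj huW hvW
              simp only [if_neg huW, if_neg hvW] at he
              cases hκu : κ u <;> cases hκv : κ v <;>
                rw [hκu, hκv] at he this <;> simp_all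
        · funext u
          have hu : u ∈ T.verts := hverts u
          by_cases huW : u ∈ W
          · simp [xvec, hu, huW]
          · have : (if κ u then (1 : Fin 3) else 0) ≠ 2 := by
              cases κ u <;> decide
            simp [xvec, hu, huW, this]
    calc ⇑((LinearMap.fst ℝ (Fin n → ℝ) ((Fin n → Fin 3) → ℝ)).comp (π.comp ρ)) ''
          {x | A.mulVec x ≤ (fun i => b (eR.symm i)) ∧ Cm.mulVec x = (fun i => d (eE.symm i))}
        = (fun y : V → ℝ => (π y).1) '' (⇑ρ '' (⇑ρ ⁻¹' SolSet a b c d)) := by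
          rw [hsol, ← Set.image_comp]
          rfl
      _ = (fun y : V → ℝ => (π y).1) '' SolSet a b c d := by
          rw [Set.image_preimage_eq _ hρsurj]
      _ = Prod.fst '' (⇑π '' SolSet a b c d) := by
          rw [← Set.image_comp]
          rfl
      _ = Prod.fst '' convexHull ℝ (outF T '' Good G T) := by rw [him]
      _ = convexHull ℝ (Prod.fst '' (outF T '' Good G T)) :=
          (LinearMap.fst ℝ (Fin n → ℝ) ((Fin n → Fin 3) → ℝ)).image_convexHull _
      _ = convexHull ℝ (xvec T '' Good G T) := by rw [Set.image_image]; rfl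
      _ = _ := by rw [hsets]

end OCTProof
end OCTProof

/-- Extended formulation of size `O(3^(τ+1)·N)` for the odd
cycle transversal polytope of a graph of treewidth `τ`. -/
theorem oct_extended_formulation :
    ∃ c : ℕ, 0 < c ∧
      ∀ (n : ℕ) (G : SimpleGraph (Fin n)) (T : NiceTree n) (τ : ℕ),
        IsNiceTreeDecompGraph G T →
        (∀ s : NiceTree n, s.isSubtree T → s.bag.card ≤ τ + 1) →
        ∃ (m p q : ℕ) (A : Matrix (Fin p) (Fin m) ℝ) (bvec : Fin p → ℝ)
          (Cmat : Matrix (Fin q) (Fin m) ℝ) (dvec : Fin q → ℝ)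
          (π : (Fin m → ℝ) →ₗ[ℝ] (Fin n → ℝ)),
          m ≤ c * 3 ^ (τ + 1) * T.size ∧ p + q ≤ c * 3 ^ (τ + 1) * T.size ∧
          π '' {x | A.mulVec x ≤ bvec ∧ Cmat.mulVec x = dvec}
            = convexHull ℝ {x : Fin n → ℝ | ∃ W : Finset (Fin n),
                (∃ κ : Fin n → Bool,
                  ∀ u v : Fin n, G.Adj u v → u ∉ W → v ∉ W → κ u ≠ κ v) ∧
                x = fun v => if v ∈ W then (1 : ℝ) else 0} :=
  OCTProof.oct_extended_formulation'
end

section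
/- Let Q be a CSP instance and T a nice tree decomposition of its constraint graph. The integral points of the polytope P(Q) are exactly the vectors f^z, over all feasible assignments z of Q, where f^z(K) = 1 if K is the configuration of the bag B induced by z (i.e., K ∈ 𝒦(B) and K(u) = z_u for all u ∈ B) and f^z(K) = 0 otherwise; moreover the map z ↦ f^z is injective, so the integral points of P(Q) are in bijection with the feasible assignments of Q. -/
variable {n : ℕ}

-- The 0/1 vector `f^z` induced by an assignment `z`: it equals `1` exactly on
-- those relevant configurations that agree with `z` on their bag.
open Classical in
noncomputable def inducedVec (Q : CSPInstance n) (T : NiceTree n) (z : Fin n → ℝ) :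
    (Fin n → Option ℝ) → ℝ :=
  fun K => if K ∈ T.relConfigs Q ∧ ∀ u, K u = none ∨ K u = some (z u) then 1 else 0

section Aux

variable {n : ℕ}

/-- `K` agrees with the assignment `z`: every defined coordinate equals `z`. -/
def Agrees (z : Fin n → ℝ) (K : Fin n → Option ℝ) : Prop :=
  ∀ u, K u = none ∨ K u = some (z u)

lemma mem_configs_iff {Q : CSPInstance n} {W : Finset (Fin n)} {K : Fin n → Option ℝ} :
    K ∈ configs Q W ↔
      ((∀ v ∈ W, ∃ a ∈ Q.dom v, K v = some a) ∧ (∀ v, v ∉ W → K v = none)) ∧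
        ∀ C ∈ Q.hard, C.scope ⊆ W → C.sat (fun v => (K v).getD 0) := by
  classical
  unfold configs
  rw [Finset.mem_filter, Fintype.mem_piFinset]
  constructor
  · rintro ⟨h1, h2⟩
    refine ⟨⟨?_, ?_⟩, h2⟩
    · intro v hv
      have := h1 v
      rw [if_pos hv, Finset.mem_image] at this
      obtain ⟨a, ha, hKa⟩ := this
      exact ⟨a, ha, hKa.symm⟩
    · intro v hv
      have := h1 v
      rw [if_neg hv] at this
      simpa using this
  · rintro ⟨⟨h1, h2⟩, h3⟩
    refine ⟨?_, h3⟩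
    intro v
    by_cases hv : v ∈ W
    · rw [if_pos hv, Finset.mem_image]
      obtain ⟨a, ha, hKa⟩ := h1 v hv
      exact ⟨a, ha, hKa.symm⟩
    · rw [if_neg hv]
      simp [h2 v hv]

/-- The configuration of `W` induced by an assignment `z`. -/
def assignCfg (z : Fin n → ℝ) (W : Finset (Fin n)) : Fin n → Option ℝ :=
  fun v => if v ∈ W then some (z v) else none

lemma assignCfg_agrees (z : Fin n → ℝ) (W : Finset (Fin n)) : Agrees z (assignCfg z W) := by
  intro u
  unfold assignCfg
  split <;> simp

lemma assignCfg_mem {Q : CSPInstance n} {z : Fin n → ℝ} (hz : Feasible Q z)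
    (W : Finset (Fin n)) : assignCfg z W ∈ configs Q W := by
  rw [mem_configs_iff]
  refine ⟨⟨?_, ?_⟩, ?_⟩
  · intro v hv
    exact ⟨z v, hz.1 v, by simp [assignCfg, hv]⟩
  · intro v hv
    simp [assignCfg, hv]
  · intro C hC hsub
    refine C.sat_congr z _ ?_ (hz.2 C hC)
    intro v hv
    simp [assignCfg, hsub hv]

lemma restrict_assignCfg {W' W : Finset (Fin n)} (h : W' ⊆ W) (z : Fin n → ℝ) :
    restrictCfg (assignCfg z W) W' = assignCfg z W' := by
  funext v
  unfold restrictCfg assignCfg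
  by_cases hv : v ∈ W'
  · rw [if_pos hv, if_pos (h hv), if_pos hv]
  · rw [if_neg hv, if_neg hv]

lemma eq_assignCfg_of_agrees {Q : CSPInstance n} {W : Finset (Fin n)}
    {K : Fin n → Option ℝ} {z : Fin n → ℝ} (hK : K ∈ configs Q W) (h : Agrees z K) :
    K = assignCfg z W := by
  rw [mem_configs_iff] at hK
  funext v
  by_cases hv : v ∈ W
  · obtain ⟨a, _, hKv⟩ := hK.1.1 v hv
    rcases h v with h0 | h0
    · rw [h0] at hKv; exact absurd hKv (by simp)
    · rw [h0]; simp [assignCfg, hv]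
  · rw [hK.1.2 v hv]; simp [assignCfg, hv]

lemma agrees_unique {Q : CSPInstance n} {W : Finset (Fin n)}
    {K K' : Fin n → Option ℝ} {z : Fin n → ℝ} (hK : K ∈ configs Q W)
    (hK' : K' ∈ configs Q W) (h : Agrees z K) (h' : Agrees z K') : K = K' := by
  rw [eq_assignCfg_of_agrees hK h, eq_assignCfg_of_agrees hK' h']

lemma mem_of_config_ne_none {Q : CSPInstance n} {W : Finset (Fin n)}
    {K : Fin n → Option ℝ} (hK : K ∈ configs Q W) {u : Fin n} (h : K u ≠ none) : u ∈ W := by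
  by_contra hu
  exact h ((mem_configs_iff.1 hK).1.2 u hu)

lemma agrees_congr {z z' : Fin n → ℝ} {K : Fin n → Option ℝ}
    (h : ∀ u, K u ≠ none → z u = z' u) : Agrees z K ↔ Agrees z' K := by
  constructor <;> intro ha u <;> rcases ha u with h0 | h0
  · exact Or.inl h0
  · right; rw [h0, h u (by rw [h0]; simp)]
  · exact Or.inl h0
  · right; rw [h0, h u (by rw [h0]; simp)]

namespace NiceTree

lemma bag_subset_verts (t : NiceTree n) : t.bag ⊆ t.verts := by
  induction t with
  | leaf v => simp [bag, verts]
  | introduce v t ih =>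
      simp only [bag, verts]
      exact Finset.insert_subset_insert v ih
  | forget v t ih =>
      simp only [bag, verts]
      exact (Finset.erase_subset _ _).trans ih
  | join t₁ t₂ ih₁ ih₂ =>
      simp only [bag, verts]
      exact ih₁.trans Finset.subset_union_left

lemma relConfigs_support {Q : CSPInstance n} {t : NiceTree n} {K : Fin n → Option ℝ}
    (hK : K ∈ t.relConfigs Q) {u : Fin n} (h : K u ≠ none) : u ∈ t.verts := by
  induction t with
  | leaf v =>
      simp only [relConfigs] at hK
      simpa [verts] using mem_of_config_ne_none hK h
  | introduce v t ih =>
      simp only [relConfigs, Finset.mem_union] at hK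
      simp only [verts]
      rcases hK with hK | hK
      · exact Finset.insert_subset_insert v (bag_subset_verts t) (mem_of_config_ne_none hK h)
      · exact Finset.mem_insert_of_mem (ih hK)
  | forget v t ih =>
      simp only [relConfigs, Finset.mem_union] at hK
      simp only [verts]
      rcases hK with hK | hK
      · exact bag_subset_verts t (Finset.erase_subset _ _ (mem_of_config_ne_none hK h))
      · exact ih hK
  | join t₁ t₂ ih₁ ih₂ =>
      simp only [relConfigs, Finset.mem_union] at hK
      simp only [verts, Finset.mem_union]
      rcases hK with hK | hK
      · exact Or.inl (ih₁ hK)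
      · exact Or.inr (ih₂ hK)

lemma configs_bag_subset_relConfigs {Q : CSPInstance n} (t : NiceTree n) :
    configs Q t.bag ⊆ t.relConfigs Q := by
  induction t with
  | leaf v => simp [bag, relConfigs]
  | introduce v t ih =>
      simp only [bag, relConfigs]
      exact Finset.subset_union_left
  | forget v t ih =>
      simp only [bag, relConfigs]
      exact Finset.subset_union_left
  | join t₁ t₂ ih₁ ih₂ =>
      simp only [bag, relConfigs]
      exact ih₁.trans Finset.subset_union_left

lemma isSubtree_self (t : NiceTree n) : t.isSubtree t := by
  cases t <;> simp [isSubtree]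



lemma isSubtree_introduce (v : Fin n) (t : NiceTree n) : t.isSubtree (introduce v t) :=
  Or.inr (isSubtree_self t)

lemma isSubtree_forget (v : Fin n) (t : NiceTree n) : t.isSubtree (forget v t) :=
  Or.inr (isSubtree_self t)

lemma isSubtree_join_left (t₁ t₂ : NiceTree n) : t₁.isSubtree (join t₁ t₂) :=
  Or.inr (Or.inl (isSubtree_self t₁))

lemma isSubtree_join_right (t₁ t₂ : NiceTree n) : t₂.isSubtree (join t₁ t₂) :=
  Or.inr (Or.inr (isSubtree_self t₂))

lemma isSubtree_trans {s t u : NiceTree n} (h1 : s.isSubtree t) (h2 : t.isSubtree u) :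
    s.isSubtree u := by
  induction u with
  | leaf v =>
      have h2' : t = leaf v := h2
      subst h2'; exact h1
  | introduce v u ih =>
      rcases (h2 : t = introduce v u ∨ t.isSubtree u) with h' | h'
      · subst h'; exact h1
      · exact Or.inr (ih h')
  | forget v u ih =>
      rcases (h2 : t = forget v u ∨ t.isSubtree u) with h' | h'
      · subst h'; exact h1
      · exact Or.inr (ih h')
  | join u₁ u₂ ih₁ ih₂ =>
      rcases (h2 : t = join u₁ u₂ ∨ t.isSubtree u₁ ∨ t.isSubtree u₂) with h' | h' | h'
      · subst h'; exact h1
      · exact Or.inr (Or.inl (ih₁ h'))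
      · exact Or.inr (Or.inr (ih₂ h'))

lemma relConfigs_mono {Q : CSPInstance n} {s t : NiceTree n} (h : s.isSubtree t) :
    s.relConfigs Q ⊆ t.relConfigs Q := by
  induction t with
  | leaf v =>
      have h' : s = leaf v := h
      subst h'; exact Finset.Subset.refl _
  | introduce v t ih =>
      rcases (h : s = introduce v t ∨ s.isSubtree t) with h' | h'
      · subst h'; exact Finset.Subset.refl _
      · exact (ih h').trans (by simp only [relConfigs]; exact Finset.subset_union_right)
  | forget v t ih =>
      rcases (h : s = forget v t ∨ s.isSubtree t) with h' | h'
      · subst h'; exact Finset.Subset.refl _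
      · exact (ih h').trans (by simp only [relConfigs]; exact Finset.subset_union_right)
  | join t₁ t₂ ih₁ ih₂ =>
      rcases (h : s = join t₁ t₂ ∨ s.isSubtree t₁ ∨ s.isSubtree t₂) with h' | h' | h'
      · subst h'; exact Finset.Subset.refl _
      · exact (ih₁ h').trans (by simp only [relConfigs]; exact Finset.subset_union_left)
      · exact (ih₂ h').trans (by simp only [relConfigs]; exact Finset.subset_union_right)

lemma exists_subtree_bag {t : NiceTree n} {v : Fin n} (hv : v ∈ t.verts) :
    ∃ s : NiceTree n, s.isSubtree t ∧ v ∈ s.bag := by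
  induction t with
  | leaf w =>
      exact ⟨.leaf w, isSubtree_self _, by simpa [verts, bag] using hv⟩
  | introduce w t ih =>
      simp only [verts, Finset.mem_insert] at hv
      rcases hv with h | h
      · exact ⟨.introduce w t, isSubtree_self _, by simp [bag, h]⟩
      · obtain ⟨s, hs, hb⟩ := ih h
        exact ⟨s, Or.inr hs, hb⟩
  | forget w t ih =>
      obtain ⟨s, hs, hb⟩ := ih hv
      exact ⟨s, Or.inr hs, hb⟩
  | join t₁ t₂ ih₁ ih₂ =>
      simp only [verts, Finset.mem_union] at hv
      rcases hv with h | h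
      · obtain ⟨s, hs, hb⟩ := ih₁ h
        exact ⟨s, Or.inr (Or.inl hs), hb⟩
      · obtain ⟨s, hs, hb⟩ := ih₂ h
        exact ⟨s, Or.inr (Or.inr hs), hb⟩

end NiceTree

lemma RelCons_subtree {Q : CSPInstance n} {f : (Fin n → Option ℝ) → ℝ} {s t : NiceTree n}
    (h : s.isSubtree t) (hf : RelCons Q f t) : RelCons Q f s := by
  induction t with
  | leaf v =>
      have h' : s = .leaf v := h
      subst h'; exact hf
  | introduce v t ih =>
      rcases (h : s = .introduce v t ∨ s.isSubtree t) with h' | h'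
      · subst h'; exact hf
      · exact ih h' hf.1
  | forget v t ih =>
      rcases (h : s = .forget v t ∨ s.isSubtree t) with h' | h'
      · subst h'; exact hf
      · exact ih h' hf.1
  | join t₁ t₂ ih₁ ih₂ =>
      rcases (h : s = .join t₁ t₂ ∨ s.isSubtree t₁ ∨ s.isSubtree t₂) with h' | h' | h'
      · subst h'; exact hf
      · exact ih₁ h' hf.1
      · exact ih₂ h' hf.2

lemma bag_sum {Q : CSPInstance n} {f : (Fin n → Option ℝ) → ℝ} {t : NiceTree n}
    (hf : RelCons Q f t) : ∑ K ∈ configs Q t.bag, f K = 1 := by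
  induction t with
  | leaf v => exact hf
  | introduce v t ih => exact hf.2.1
  | forget v t ih => exact hf.2.1
  | join t₁ t₂ ih₁ ih₂ => exact ih₁ hf.1

lemma sum_eq_one_unique {α : Type*} {s : Finset α} {f : α → ℝ}
    (h01 : ∀ K, f K = 0 ∨ f K = 1) (h1 : ∑ K ∈ s, f K = 1) :
    ∃ K ∈ s, f K = 1 ∧ ∀ K' ∈ s, f K' = 1 → K' = K := by
  classical
  have hnn : ∀ K ∈ s, 0 ≤ f K := by
    intro K _; rcases h01 K with h | h <;> simp [h]
  have hex : ∃ K ∈ s, f K ≠ 0 := by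
    by_contra hc
    push_neg at hc
    rw [Finset.sum_eq_zero hc] at h1
    norm_num at h1
  obtain ⟨K, hKs, hK0⟩ := hex
  have hK1 : f K = 1 := (h01 K).resolve_left hK0
  refine ⟨K, hKs, hK1, ?_⟩
  intro K' hK's hK'1
  by_contra hne
  have hsplit : f K + ∑ x ∈ s.erase K, f x = ∑ x ∈ s, f x :=
    Finset.add_sum_erase s f hKs
  have hle : f K' ≤ ∑ x ∈ s.erase K, f x :=
    Finset.single_le_sum (fun i hi => hnn i (Finset.mem_of_mem_erase hi))
      (Finset.mem_erase.2 ⟨hne, hK's⟩)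
  rw [h1] at hsplit
  rw [hK'1] at hle
  rw [hK1] at hsplit
  linarith

end Aux
section Aux2

variable {n : ℕ}

open NiceTree

/-- Key lemma: an integral vector satisfying the relevant constraints of a valid
nice tree comes from an assignment. -/
lemma exists_assignment {Q : CSPInstance n} {f : (Fin n → Option ℝ) → ℝ}
    (h01 : ∀ K, f K = 0 ∨ f K = 1) :
    ∀ t : NiceTree n, t.valid → RelCons Q f t →
      ∃ z : Fin n → ℝ, (∀ v ∈ t.verts, z v ∈ Q.dom v) ∧
        ∀ K ∈ t.relConfigs Q, (f K = 1 ↔ Agrees z K) := by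
  intro t
  induction t with
  | leaf v =>
      intro _ hrc
      obtain ⟨K₀, hK₀mem, hK₀1, hK₀u⟩ :=
        sum_eq_one_unique h01 (hrc : ∑ K ∈ configs Q {v}, f K = 1)
      obtain ⟨a, ha, hKa⟩ := (mem_configs_iff.1 hK₀mem).1.1 v (Finset.mem_singleton_self v)
      refine ⟨fun _ => a, ?_, ?_⟩
      · intro u hu
        have : u = v := by simpa [verts] using hu
        subst this; exact ha
      · intro K hK
        have hK' : K ∈ configs Q {v} := hK
        have hag₀ : Agrees (fun _ => a) K₀ := by
          intro u
          by_cases hu : u = v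
          · subst hu; right; exact hKa
          · left; exact (mem_configs_iff.1 hK₀mem).1.2 u (by simp [hu])
        constructor
        · intro h1
          rw [hK₀u K hK' h1]; exact hag₀
        · intro hag
          rw [agrees_unique hK' hK₀mem hag hag₀]; exact hK₀1
  | introduce v t ih =>
      intro hval hrc
      obtain ⟨hv, hval'⟩ := hval
      obtain ⟨hrc', hbag', hcons⟩ := hrc
      obtain ⟨z, hzdom, hziff⟩ := ih hval' hrc'
      -- chosen configuration of the child's bag
      obtain ⟨K₀, hK₀mem, hK₀1, hK₀u⟩ := sum_eq_one_unique h01 (bag_sum hrc')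
      have hK₀ag : Agrees z K₀ :=
        (hziff K₀ (configs_bag_subset_relConfigs t hK₀mem)).1 hK₀1
      -- chosen configuration of the new bag
      obtain ⟨K', hK'mem, hK'1, hK'u⟩ := sum_eq_one_unique h01 hbag'
      -- the restriction of K' is K₀
      have hres : restrictCfg K' t.bag = K₀ := by
        have h1 : ∑ K'' ∈ (configs Q (insert v t.bag)).filter
            (fun K'' => restrictCfg K'' t.bag = K₀), f K'' = 1 := by
          rw [hcons K₀ hK₀mem]; exact hK₀1
        obtain ⟨K'', hK''mem, hK''1, _⟩ := sum_eq_one_unique h01 h1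
        rw [Finset.mem_filter] at hK''mem
        rw [← hK'u K'' hK''mem.1 hK''1]
        exact hK''mem.2
      obtain ⟨a, ha, hKa⟩ :=
        (mem_configs_iff.1 hK'mem).1.1 v (Finset.mem_insert_self v _)
      have hvb : v ∉ t.bag := fun h => hv (bag_subset_verts t h)
      set z' : Fin n → ℝ := Function.update z v a with hz'
      have hz'eq : ∀ u, u ≠ v → z' u = z u := by
        intro u hu; simp [hz', Function.update_of_ne hu]
      have hK'ag : Agrees z' K' := by
        intro u
        by_cases hu : u = v
        · subst hu; right; rw [hKa]; simp [hz']
        · by_cases hub : u ∈ t.bag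
          · have : K' u = K₀ u := by
              rw [← hres]; simp [restrictCfg, hub]
            rw [this, hz'eq u hu]
            exact hK₀ag u
          · left
            exact (mem_configs_iff.1 hK'mem).1.2 u (by simp [hu, hub])
      refine ⟨z', ?_, ?_⟩
      · intro u hu
        simp only [verts, Finset.mem_insert] at hu
        rcases hu with hu | hu
        · subst hu; simpa [hz'] using ha
        · have hne : u ≠ v := fun h => hv (h ▸ hu)
          rw [hz'eq u hne]; exact hzdom u hu
      · intro K hK
        simp only [relConfigs, Finset.mem_union] at hK
        rcases hK with hK | hK
        · constructor
          · intro h1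
            rw [hK'u K hK h1]; exact hK'ag
          · intro hag
            rw [agrees_unique hK hK'mem hag hK'ag]; exact hK'1
        · have hcongr : Agrees z K ↔ Agrees z' K := by
            refine agrees_congr ?_
            intro u hu
            have huv : u ∈ t.verts := relConfigs_support hK hu
            exact (hz'eq u (fun h => hv (h ▸ huv))).symm
          exact (hziff K hK).trans hcongr
  | forget v t ih =>
      intro hval hrc
      obtain ⟨hvb, hval'⟩ := hval
      obtain ⟨hrc', hbag', hcons⟩ := hrc
      obtain ⟨z, hzdom, hziff⟩ := ih hval' hrc'
      obtain ⟨K₀, hK₀mem, hK₀1, hK₀u⟩ := sum_eq_one_unique h01 (bag_sum hrc')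
      have hK₀ag : Agrees z K₀ :=
        (hziff K₀ (configs_bag_subset_relConfigs t hK₀mem)).1 hK₀1
      obtain ⟨K', hK'mem, hK'1, hK'u⟩ := sum_eq_one_unique h01 hbag'
      have hres : restrictCfg K₀ (t.bag.erase v) = K' := by
        have h1 : ∑ K'' ∈ (configs Q t.bag).filter
            (fun K'' => restrictCfg K'' (t.bag.erase v) = K'), f K'' = 1 := by
          rw [hcons K' hK'mem]; exact hK'1
        obtain ⟨K'', hK''mem, hK''1, _⟩ := sum_eq_one_unique h01 h1
        rw [Finset.mem_filter] at hK''mem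
        rw [← hK₀u K'' hK''mem.1 hK''1]
        exact hK''mem.2
      have hK'ag : Agrees z K' := by
        intro u
        rw [← hres]
        by_cases hu : u ∈ t.bag.erase v
        · simp only [restrictCfg, if_pos hu]; exact hK₀ag u
        · left; simp [restrictCfg, hu]
      refine ⟨z, ?_, ?_⟩
      · intro u hu; exact hzdom u hu
      · intro K hK
        simp only [relConfigs, Finset.mem_union] at hK
        rcases hK with hK | hK
        · constructor
          · intro h1
            rw [hK'u K hK h1]; exact hK'ag
          · intro hag
            rw [agrees_unique hK hK'mem hag hK'ag]; exact hK'1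
        · exact hziff K hK
  | join t₁ t₂ ih₁ ih₂ =>
      intro hval hrc
      obtain ⟨hbeq, hint, hval₁, hval₂⟩ := hval
      obtain ⟨hrc₁, hrc₂⟩ := hrc
      obtain ⟨z₁, hz₁dom, hz₁iff⟩ := ih₁ hval₁ hrc₁
      obtain ⟨z₂, hz₂dom, hz₂iff⟩ := ih₂ hval₂ hrc₂
      obtain ⟨K₁, hK₁mem, hK₁1, hK₁u⟩ := sum_eq_one_unique h01 (bag_sum hrc₁)
      obtain ⟨K₂, hK₂mem, hK₂1, hK₂u⟩ := sum_eq_one_unique h01 (bag_sum hrc₂)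
      have hK₁ag : Agrees z₁ K₁ :=
        (hz₁iff K₁ (configs_bag_subset_relConfigs t₁ hK₁mem)).1 hK₁1
      have hK₂ag : Agrees z₂ K₂ :=
        (hz₂iff K₂ (configs_bag_subset_relConfigs t₂ hK₂mem)).1 hK₂1
      have hK12 : K₂ = K₁ := by
        refine hK₁u K₂ ?_ hK₂1
        rw [hbeq]; exact hK₂mem
      have hzz : ∀ u ∈ t₁.bag, z₁ u = z₂ u := by
        intro u hu
        obtain ⟨a, _, hKa⟩ := (mem_configs_iff.1 hK₁mem).1.1 u hu
        have h1 : K₁ u = some (z₁ u) := (hK₁ag u).resolve_left (by rw [hKa]; simp)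
        have h2 : K₁ u = some (z₂ u) := by
          rw [← hK12]
          exact (hK₂ag u).resolve_left (by rw [hK12, hKa]; simp)
        rw [h1] at h2
        exact Option.some_injective _ h2
      classical
      set z : Fin n → ℝ := fun u => if u ∈ t₁.verts then z₁ u else z₂ u with hzdef
      have hz1 : ∀ u ∈ t₁.verts, z u = z₁ u := by
        intro u hu; simp [hzdef, hu]
      have hz2 : ∀ u ∈ t₂.verts, z u = z₂ u := by
        intro u hu
        by_cases h1 : u ∈ t₁.verts
        · have : u ∈ t₁.bag := hint (Finset.mem_inter.2 ⟨h1, hu⟩)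
          simp [hzdef, h1, hzz u this]
        · simp [hzdef, h1]
      refine ⟨z, ?_, ?_⟩
      · intro u hu
        simp only [verts, Finset.mem_union] at hu
        by_cases h1 : u ∈ t₁.verts
        · rw [hz1 u h1]; exact hz₁dom u h1
        · rcases hu with hu | hu
          · exact absurd hu h1
          · rw [hz2 u hu]; exact hz₂dom u hu
      · intro K hK
        simp only [relConfigs, Finset.mem_union] at hK
        rcases hK with hK | hK
        · refine (hz₁iff K hK).trans (agrees_congr ?_)
          intro u hu
          exact (hz1 u (relConfigs_support hK hu)).symm
        · refine (hz₂iff K hK).trans (agrees_congr ?_)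
          intro u hu
          exact (hz2 u (relConfigs_support hK hu)).symm

end Aux2
section Aux3

variable {n : ℕ}

open NiceTree

lemma inducedVec_apply {Q : CSPInstance n} {T : NiceTree n} {z : Fin n → ℝ}
    {W : Finset (Fin n)} (hW : configs Q W ⊆ T.relConfigs Q)
    {K : Fin n → Option ℝ} (hK : K ∈ configs Q W) :
    inducedVec Q T z K = if K = assignCfg z W then 1 else 0 := by
  classical
  by_cases h : K = assignCfg z W
  · rw [if_pos h]
    unfold inducedVec
    rw [if_pos ⟨hW hK, h ▸ assignCfg_agrees z W⟩]
  · rw [if_neg h]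
    unfold inducedVec
    rw [if_neg]
    rintro ⟨-, hag⟩
    exact h (eq_assignCfg_of_agrees hK hag)

lemma sum_indicator_filter {α : Type*} [DecidableEq α] {s : Finset α} (a : α) :
    ∑ x ∈ s, (if x = a then (1 : ℝ) else 0) = if a ∈ s then 1 else 0 := by
  by_cases h : a ∈ s
  · rw [if_pos h, Finset.sum_eq_single_of_mem a h (fun b _ hb => if_neg hb), if_pos rfl]
  · rw [if_neg h, Finset.sum_eq_zero]
    intro b hb
    rw [if_neg]
    rintro rfl
    exact h hb

lemma sum_induced_one {Q : CSPInstance n} {T : NiceTree n} {z : Fin n → ℝ}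
    (hz : Feasible Q z) {W : Finset (Fin n)} (hW : configs Q W ⊆ T.relConfigs Q) :
    ∑ K ∈ configs Q W, inducedVec Q T z K = 1 := by
  classical
  rw [Finset.sum_congr rfl (fun K hK => inducedVec_apply hW hK),
    sum_indicator_filter, if_pos (assignCfg_mem hz W)]

lemma relCons_induced {Q : CSPInstance n} {T : NiceTree n} {z : Fin n → ℝ}
    (hz : Feasible Q z) :
    ∀ t : NiceTree n, t.isSubtree T → RelCons Q (inducedVec Q T z) t := by
  intro t
  induction t with
  | leaf v =>
      intro hsub
      exact sum_induced_one hz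
        ((configs_bag_subset_relConfigs (Q := Q) (.leaf v)).trans (relConfigs_mono hsub))
  | introduce v t ih =>
      intro hsub
      have hsub' : t.isSubtree T := isSubtree_trans (isSubtree_introduce v t) hsub
      have hWt : configs Q t.bag ⊆ T.relConfigs Q :=
        (configs_bag_subset_relConfigs t).trans (relConfigs_mono hsub')
      have hW' : configs Q (insert v t.bag) ⊆ T.relConfigs Q :=
        (configs_bag_subset_relConfigs (Q := Q) (.introduce v t)).trans (relConfigs_mono hsub)
      refine ⟨ih hsub', sum_induced_one hz hW', ?_⟩
      intro K hK
      classical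
      rw [inducedVec_apply hWt hK]
      rw [Finset.sum_congr rfl
        (fun K' hK' => inducedVec_apply hW' (Finset.mem_filter.1 hK').1),
        sum_indicator_filter]
      have hA'mem : assignCfg z (insert v t.bag) ∈ configs Q (insert v t.bag) :=
        assignCfg_mem hz _
      have hres : restrictCfg (assignCfg z (insert v t.bag)) t.bag = assignCfg z t.bag :=
        restrict_assignCfg (Finset.subset_insert _ _) z
      by_cases h : K = assignCfg z t.bag
      · rw [if_pos h, if_pos]
        rw [Finset.mem_filter]
        exact ⟨hA'mem, by rw [hres, h]⟩
      · rw [if_neg h, if_neg]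
        rw [Finset.mem_filter]
        rintro ⟨-, hr⟩
        exact h (by rw [← hr, hres])
  | forget v t ih =>
      intro hsub
      have hsub' : t.isSubtree T := isSubtree_trans (isSubtree_forget v t) hsub
      have hWt : configs Q t.bag ⊆ T.relConfigs Q :=
        (configs_bag_subset_relConfigs t).trans (relConfigs_mono hsub')
      have hW' : configs Q (t.bag.erase v) ⊆ T.relConfigs Q :=
        (configs_bag_subset_relConfigs (Q := Q) (.forget v t)).trans (relConfigs_mono hsub)
      refine ⟨ih hsub', sum_induced_one hz hW', ?_⟩
      intro K hK
      classical
      rw [inducedVec_apply hW' hK]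
      rw [Finset.sum_congr rfl
        (fun K' hK' => inducedVec_apply hWt (Finset.mem_filter.1 hK').1),
        sum_indicator_filter]
      have hAmem : assignCfg z t.bag ∈ configs Q t.bag := assignCfg_mem hz _
      have hres : restrictCfg (assignCfg z t.bag) (t.bag.erase v) = assignCfg z (t.bag.erase v) :=
        restrict_assignCfg (Finset.erase_subset _ _) z
      by_cases h : K = assignCfg z (t.bag.erase v)
      · rw [if_pos h, if_pos]
        rw [Finset.mem_filter]
        exact ⟨hAmem, by rw [hres, h]⟩
      · rw [if_neg h, if_neg]
        rw [Finset.mem_filter]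
        rintro ⟨-, hr⟩
        exact h (by rw [← hr, hres])
  | join t₁ t₂ ih₁ ih₂ =>
      intro hsub
      exact ⟨ih₁ (isSubtree_trans (isSubtree_join_left t₁ t₂) hsub),
        ih₂ (isSubtree_trans (isSubtree_join_right t₁ t₂) hsub)⟩

end Aux3
/-- The integral points of `P(Q)` are exactly the vectors
`f^z` over feasible assignments `z`, and `z ↦ f^z` is injective on feasible
assignments. -/
theorem integral_points_of_ppoly (n : ℕ) (Q : CSPInstance n) (T : NiceTree n)
    (hT : IsNiceTreeDecompCSP Q T) :
    {f | f ∈ Ppoly Q T ∧ ∀ K, f K = 0 ∨ f K = 1}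
      = inducedVec Q T '' {z | Feasible Q z} ∧
    Set.InjOn (inducedVec Q T) {z | Feasible Q z} := by
  classical
  obtain ⟨hval, hverts, hdecomp⟩ := hT
  constructor
  · ext f
    simp only [Set.mem_setOf_eq, Set.mem_image]
    constructor
    · rintro ⟨⟨⟨hrc, _⟩, hzero⟩, h01⟩
      obtain ⟨z, hzdom, hziff⟩ := exists_assignment h01 T hval hrc
      have hfeas : Feasible Q z := by
        refine ⟨fun v => hzdom v (hverts v), ?_⟩
        intro C hC
        obtain ⟨s, hs, hscope⟩ := hdecomp C (List.mem_append.2 (Or.inl hC))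
        obtain ⟨K, hKmem, hK1, -⟩ := sum_eq_one_unique h01 (bag_sum (RelCons_subtree hs hrc))
        have hKag : Agrees z K := (hziff K
          (NiceTree.relConfigs_mono hs (NiceTree.configs_bag_subset_relConfigs s hKmem))).1 hK1
        have hsat := (mem_configs_iff.1 hKmem).2 C hC hscope
        refine C.sat_congr _ _ ?_ hsat
        intro u hu
        obtain ⟨a, _, hKa⟩ := (mem_configs_iff.1 hKmem).1.1 u (hscope hu)
        have : K u = some (z u) := (hKag u).resolve_left (by rw [hKa]; simp)
        rw [this]
        rfl
      refine ⟨z, hfeas, ?_⟩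
      funext K
      by_cases hK : K ∈ T.relConfigs Q
      · unfold inducedVec
        rcases h01 K with h0 | h1
        · rw [h0, if_neg]
          rintro ⟨-, hag⟩
          have := (hziff K hK).2 hag
          rw [h0] at this
          norm_num at this
        · rw [h1, if_pos ⟨hK, (hziff K hK).1 h1⟩]
      · rw [hzero K hK]
        unfold inducedVec
        rw [if_neg (fun h => hK h.1)]
    · rintro ⟨z, hz, rfl⟩
      refine ⟨⟨⟨relCons_induced hz T (NiceTree.isSubtree_self T), ?_⟩, ?_⟩, ?_⟩
      · intro K _
        unfold inducedVec
        split <;> norm_num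
      · intro K hK
        unfold inducedVec
        rw [if_neg (fun h => hK h.1)]
      · intro K
        unfold inducedVec
        split
        · right; rfl
        · left; rfl
  · intro z hz z' hz' heq
    funext v
    obtain ⟨s, hs, hvb⟩ := NiceTree.exists_subtree_bag (hverts v)
    have hA : assignCfg z s.bag ∈ T.relConfigs Q :=
      NiceTree.relConfigs_mono hs
        (NiceTree.configs_bag_subset_relConfigs s (assignCfg_mem hz s.bag))
    have h1 : inducedVec Q T z (assignCfg z s.bag) = 1 := by
      unfold inducedVec
      rw [if_pos ⟨hA, assignCfg_agrees z s.bag⟩]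
    rw [heq] at h1
    have hag : Agrees z' (assignCfg z s.bag) := by
      by_contra hc
      unfold inducedVec at h1
      rw [if_neg (fun h => hc h.2)] at h1
      norm_num at h1
    have := (hag v).resolve_left (by simp [assignCfg, hvb])
    simpa [assignCfg, hvb] using this
end
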